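/- arXiv:1910.01890 — 8 statements merged into one kernel-verified Lean document; each statement's English description precedes it below -/
import Mathlib

section
/- Let μ_0 > 0, let μ : [0,∞) → ℝ be continuous with μ(a) ≥ μ_0 for all a ≥ 0, let λ > −μ_0 be real, c ∈ ℝ, and let ψ : [0,∞) → ℝ be continuous and integrable. Define φ(a) = c·exp(−∫_0^a (μ(s)+λ) ds) + ∫_0^a exp(−∫_s^a (μ(ξ)+λ) dξ)·ψ(s) ds. Then φ is continuously differentiable with φ(0) = c and φ'(a) + (μ(a)+λ)·φ(a) = ψ(a) for all a ≥ 0; moreover φ is integrable on [0,∞) with ∫_0^∞ |φ(a)| da ≤ (|c| + ∫_0^∞ |ψ(s)| ds)/(λ + μ_0). -/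
open MeasureTheory Real Set

/-- **Explicit resolvent formula for the age-structured generator.**
For `λ > -μ₀`, the function
`φ a = c·exp(-∫_0^a (μ+λ)) + ∫_0^a exp(-∫_s^a (μ+λ)) ψ(s) ds`
is continuously differentiable on `[0,∞)` with `φ 0 = c`,
`φ' a + (μ a + λ) φ a = ψ a`, and it is integrable with
`∫_0^∞ |φ| ≤ (|c| + ∫_0^∞ |ψ|)/(λ + μ₀)`. -/
theorem resolvent_formula (μ0 l c : ℝ) (hμ0 : 0 < μ0) (hl : -μ0 < l)
    (μ ψ : ℝ → ℝ)
    (hμc : ContinuousOn μ (Ici 0)) (hμb : ∀ a, 0 ≤ a → μ0 ≤ μ a)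
    (hψc : ContinuousOn ψ (Ici 0)) (hψint : IntegrableOn ψ (Ici 0))
    (φ : ℝ → ℝ)
    (hφ : ∀ a, φ a = c * Real.exp (-(∫ s in (0:ℝ)..a, (μ s + l))) +
        ∫ s in (0:ℝ)..a, Real.exp (-(∫ ξ in s..a, (μ ξ + l))) * ψ s) :
    φ 0 = c ∧
    (∀ a ∈ Ici (0:ℝ), HasDerivWithinAt φ (ψ a - (μ a + l) * φ a) (Ici 0) a) ∧
    ContinuousOn (fun a => ψ a - (μ a + l) * φ a) (Ici 0) ∧
    IntegrableOn φ (Ici 0) ∧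
    (∫ a in Ici (0:ℝ), |φ a|) ≤ (|c| + ∫ s in Ici (0:ℝ), |ψ s|) / (l + μ0) := by
  have hk : (0:ℝ) < l + μ0 := by linarith
  set k : ℝ := l + μ0 with hkdef
  set μ₁ : ℝ → ℝ := fun a => μ (max a 0) + l with hμ₁def
  set ψ₁ : ℝ → ℝ := fun a => ψ (max a 0) with hψ₁def
  have hmax : Continuous fun a : ℝ => max a 0 := continuous_id.max continuous_const
  have hmem : ∀ x : ℝ, max x 0 ∈ Ici (0:ℝ) := fun x => mem_Ici.2 (le_max_right _ _)
  have hμ₁c : Continuous μ₁ := (hμc.comp_continuous hmax hmem).add continuous_const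
  have hψ₁c : Continuous ψ₁ := hψc.comp_continuous hmax hmem
  have hμ₁k : ∀ a : ℝ, k ≤ μ₁ a := by
    intro a
    have := hμb (max a 0) (hmem a)
    simp only [hμ₁def, hkdef]
    linarith
  have hμ₁eq : ∀ a : ℝ, 0 ≤ a → μ₁ a = μ a + l := by
    intro a ha; simp [hμ₁def, max_eq_left ha]
  have hψ₁eq : ∀ a : ℝ, 0 ≤ a → ψ₁ a = ψ a := by
    intro a ha; simp [hψ₁def, max_eq_left ha]
  set M : ℝ → ℝ := fun a => ∫ s in (0:ℝ)..a, μ₁ s with hMdef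
  have hMd : ∀ a : ℝ, HasDerivAt M (μ₁ a) a := fun a =>
    (hμ₁c.integral_hasStrictDerivAt 0 a).hasDerivAt
  have hMc : Continuous M :=
    continuous_iff_continuousAt.2 fun a => (hMd a).continuousAt
  have hM0 : M 0 = 0 := by simp [hMdef]
  have hMsub : ∀ s a : ℝ, M a - M s = ∫ ξ in s..a, μ₁ ξ := fun s a =>
    intervalIntegral.integral_interval_sub_left (hμ₁c.intervalIntegrable 0 a)
      (hμ₁c.intervalIntegrable 0 s)
  have hMk : ∀ s a : ℝ, s ≤ a → k * (a - s) ≤ M a - M s := by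
    intro s a hsa
    rw [hMsub]
    calc k * (a - s) = ∫ _ in s..a, k := by
          rw [intervalIntegral.integral_const, smul_eq_mul, mul_comm]
      _ ≤ ∫ ξ in s..a, μ₁ ξ :=
      intervalIntegral.integral_mono_on hsa intervalIntegrable_const
        (hμ₁c.intervalIntegrable s a) (fun x _ => hμ₁k x)
  set g : ℝ → ℝ := fun a => c + ∫ s in (0:ℝ)..a, Real.exp (M s) * ψ₁ s with hgdef
  have hgintc : Continuous fun s => Real.exp (M s) * ψ₁ s :=
    (Real.continuous_exp.comp hMc).mul hψ₁c
  have hgd : ∀ a, HasDerivAt g (Real.exp (M a) * ψ₁ a) a := fun a =>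
    ((hgintc.integral_hasStrictDerivAt 0 a).hasDerivAt).const_add c
  set Φ : ℝ → ℝ := fun a => Real.exp (-M a) * g a with hΦdef
  have hΦd : ∀ a, HasDerivAt Φ (ψ₁ a - μ₁ a * Φ a) a := by
    intro a
    have h1 : HasDerivAt (fun x => Real.exp (-M x)) (Real.exp (-M a) * -μ₁ a) a :=
      ((hMd a).neg).exp
    have h2 := h1.mul (hgd a)
    have h3 : ψ₁ a - μ₁ a * Φ a =
        Real.exp (-M a) * -μ₁ a * g a + Real.exp (-M a) * (Real.exp (M a) * ψ₁ a) := by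
      simp only [hΦdef]
      rw [show Real.exp (-M a) * (Real.exp (M a) * ψ₁ a) = ψ₁ a by
        rw [← mul_assoc, ← Real.exp_add]; simp]
      ring
    rw [h3]; exact h2
  have hΦc : Continuous Φ :=
    continuous_iff_continuousAt.2 fun a => (hΦd a).continuousAt
  have hφΦ : ∀ a : ℝ, 0 ≤ a → φ a = Φ a := by
    intro a ha
    have hM1 : (∫ s in (0:ℝ)..a, (μ s + l)) = M a := by
      rw [hMdef]
      apply intervalIntegral.integral_congr
      intro s hs
      rw [uIcc_of_le ha] at hs
      exact (hμ₁eq s hs.1).symm ▸ rfl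
    have hinner : ∀ s ∈ uIcc (0:ℝ) a,
        Real.exp (-(∫ ξ in s..a, (μ ξ + l))) * ψ s
          = Real.exp (-M a) * (Real.exp (M s) * ψ₁ s) := by
      intro s hs
      rw [uIcc_of_le ha] at hs
      have h1 : (∫ ξ in s..a, (μ ξ + l)) = M a - M s := by
        rw [hMsub s a]
        apply intervalIntegral.integral_congr
        intro ξ hξ
        rw [uIcc_of_le hs.2] at hξ
        exact (hμ₁eq ξ (le_trans hs.1 hξ.1)).symm
      rw [h1, hψ₁eq s hs.1, neg_sub,
        show M s - M a = -M a + M s by ring, Real.exp_add]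
      ring
    rw [hφ a, hM1, intervalIntegral.integral_congr hinner,
      intervalIntegral.integral_const_mul]
    simp only [hΦdef, hgdef]
    ring
  have heq : Set.EqOn φ Φ (Ici 0) := fun x hx => hφΦ x hx
  have hφcont : ContinuousOn φ (Ici 0) := hΦc.continuousOn.congr heq
  -- the auxiliary dominating function
  set F : ℝ → ℝ := fun a => ∫ s in (0:ℝ)..a, Real.exp (k * s) * |ψ₁ s| with hFdef
  have hFintc : Continuous fun s : ℝ => Real.exp (k * s) * |ψ₁ s| :=
    (Real.continuous_exp.comp (continuous_const.mul continuous_id)).mul hψ₁c.abs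
  have hFd : ∀ a, HasDerivAt F (Real.exp (k * a) * |ψ₁ a|) a := fun a =>
    (hFintc.integral_hasStrictDerivAt 0 a).hasDerivAt
  set D : ℝ → ℝ := fun a => Real.exp (-(k * a)) * F a with hDdef
  have hexpc : Continuous fun a : ℝ => Real.exp (-(k * a)) :=
    Real.continuous_exp.comp (continuous_const.mul continuous_id).neg
  have hDd : ∀ a, HasDerivAt D (|ψ₁ a| - k * D a) a := by
    intro a
    have hlin : HasDerivAt (fun x : ℝ => -(k * x)) (-k) a := by
      have h := ((hasDerivAt_id a).const_mul k).neg; rw [mul_one] at h; exact h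
    have h1 := hlin.exp
    have h2 := h1.mul (hFd a)
    have h3 : |ψ₁ a| - k * D a =
        Real.exp (-(k * a)) * -k * F a + Real.exp (-(k * a)) * (Real.exp (k * a) * |ψ₁ a|) := by
      simp only [hDdef]
      rw [show Real.exp (-(k * a)) * (Real.exp (k * a) * |ψ₁ a|) = |ψ₁ a| by
        rw [← mul_assoc, ← Real.exp_add]; simp]
      ring
    rw [h3]; exact h2
  have hDc : Continuous D :=
    continuous_iff_continuousAt.2 fun a => (hDd a).continuousAt
  have hDnonneg : ∀ a : ℝ, 0 ≤ a → 0 ≤ D a := by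
    intro a ha
    apply mul_nonneg (Real.exp_pos _).le
    exact intervalIntegral.integral_nonneg ha
      (fun u _ => mul_nonneg (Real.exp_pos _).le (abs_nonneg _))
  have hDint : ∀ T : ℝ, 0 ≤ T →
      (∫ a in (0:ℝ)..T, D a) ≤ (∫ s in Ici (0:ℝ), |ψ s|) / k := by
    intro T hT
    have hftc : (∫ a in (0:ℝ)..T, (|ψ₁ a| - k * D a)) = D T - D 0 :=
      intervalIntegral.integral_eq_sub_of_hasDerivAt (fun x _ => hDd x)
        ((hψ₁c.abs.sub (continuous_const.mul hDc)).intervalIntegrable 0 T)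
    have hD0 : D 0 = 0 := by simp [hDdef, hFdef]
    have hsplit : (∫ a in (0:ℝ)..T, (|ψ₁ a| - k * D a)) =
        (∫ a in (0:ℝ)..T, |ψ₁ a|) - k * ∫ a in (0:ℝ)..T, D a := by
      rw [intervalIntegral.integral_sub (g := fun a => k * D a) (hψ₁c.abs.intervalIntegrable 0 T)
        ((continuous_const.mul hDc).intervalIntegrable 0 T),
        intervalIntegral.integral_const_mul]
    have hψT : (∫ a in (0:ℝ)..T, |ψ₁ a|) ≤ ∫ s in Ici (0:ℝ), |ψ s| := by
      have h1 : (∫ a in (0:ℝ)..T, |ψ₁ a|) = ∫ a in Ioc (0:ℝ) T, |ψ a| := by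
        rw [intervalIntegral.integral_of_le hT]
        apply setIntegral_congr_fun measurableSet_Ioc
        intro x hx
        simp [hψ₁eq x hx.1.le]
      rw [h1]
      exact setIntegral_mono_set hψint.abs (ae_of_all _ fun x => abs_nonneg _)
        (HasSubset.Subset.eventuallyLE (fun x hx => le_of_lt hx.1))
    have hDT := hDnonneg T hT
    rw [hsplit, hD0, sub_zero] at hftc
    rw [le_div_iff₀ hk]
    nlinarith
  have hptw : ∀ a : ℝ, 0 ≤ a → |Φ a| ≤ |c| * Real.exp (-(k * a)) + D a := by
    intro a ha
    have hb1 : |Φ a| ≤ Real.exp (-M a) * |c| +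
        Real.exp (-M a) * ∫ s in (0:ℝ)..a, Real.exp (M s) * |ψ₁ s| := by
      simp only [hΦdef, hgdef]
      beta_reduce
      rw [abs_mul, Real.abs_exp, ← mul_add]
      apply mul_le_mul_of_nonneg_left _ (Real.exp_pos _).le
      refine le_trans (abs_add_le _ _) (add_le_add le_rfl ?_)
      refine le_trans (intervalIntegral.abs_integral_le_integral_abs ha) ?_
      apply le_of_eq
      apply intervalIntegral.integral_congr
      intro s _
      simp [abs_mul, Real.abs_exp]
    have hb2 : Real.exp (-M a) ≤ Real.exp (-(k * a)) := by
      apply Real.exp_le_exp.2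
      have := hMk 0 a ha
      rw [hM0, sub_zero, sub_zero] at this
      linarith
    have hb3 : Real.exp (-M a) * (∫ s in (0:ℝ)..a, Real.exp (M s) * |ψ₁ s|) ≤ D a := by
      simp only [hDdef, hFdef]
      beta_reduce
      rw [← intervalIntegral.integral_const_mul, ← intervalIntegral.integral_const_mul]
      apply intervalIntegral.integral_mono_on ha
        ((continuous_const.mul ((Real.continuous_exp.comp hMc).mul hψ₁c.abs)).intervalIntegrable 0 a)
        ((continuous_const.mul hFintc).intervalIntegrable 0 a)
      intro s hs
      beta_reduce
      have hle : Real.exp (-M a) * Real.exp (M s) ≤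
          Real.exp (-(k * a)) * Real.exp (k * s) := by
        rw [← Real.exp_add, ← Real.exp_add]
        apply Real.exp_le_exp.2
        have := hMk s a hs.2
        rw [mul_sub] at this
        linarith
      calc Real.exp (-M a) * (Real.exp (M s) * |ψ₁ s|)
          = Real.exp (-M a) * Real.exp (M s) * |ψ₁ s| := by ring
        _ ≤ Real.exp (-(k * a)) * Real.exp (k * s) * |ψ₁ s| :=
            mul_le_mul_of_nonneg_right hle (abs_nonneg _)
        _ = Real.exp (-(k * a)) * (Real.exp (k * s) * |ψ₁ s|) := by ring
    calc |Φ a| ≤ Real.exp (-M a) * |c| +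
        Real.exp (-M a) * ∫ s in (0:ℝ)..a, Real.exp (M s) * |ψ₁ s| := hb1
    _ ≤ Real.exp (-(k * a)) * |c| + D a := by
        refine add_le_add (mul_le_mul_of_nonneg_right hb2 (abs_nonneg _)) hb3
    _ = |c| * Real.exp (-(k * a)) + D a := by ring
  have hIT : ∀ T : ℝ, 0 ≤ T →
      (∫ a in (0:ℝ)..T, |Φ a|) ≤ (|c| + ∫ s in Ici (0:ℝ), |ψ s|) / k := by
    intro T hT
    have hexpint : (∫ a in (0:ℝ)..T, Real.exp (-(k * a))) ≤ 1 / k := by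
      have hder : ∀ x ∈ uIcc (0:ℝ) T,
          HasDerivAt (fun a : ℝ => -(Real.exp (-(k * a)) / k)) (Real.exp (-(k * x))) x := by
        intro x _
        have hlin : HasDerivAt (fun a : ℝ => -(k * a)) (-k) x := by
          have h := ((hasDerivAt_id x).const_mul k).neg; rw [mul_one] at h; exact h
        have h := (hlin.exp.div_const k).neg
        exact h.congr_deriv (by rw [mul_neg, neg_div, neg_neg, mul_div_assoc, div_self hk.ne', mul_one])
      rw [intervalIntegral.integral_eq_sub_of_hasDerivAt hder
        (hexpc.intervalIntegrable 0 T)]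
      have h1 := (Real.exp_pos (-(k * T))).le
      have h2 : (0:ℝ) ≤ Real.exp (-(k * T)) / k := div_nonneg h1 hk.le
      simp only [mul_zero, neg_zero, Real.exp_zero]
      linarith
    have hmono : (∫ a in (0:ℝ)..T, |Φ a|) ≤
        ∫ a in (0:ℝ)..T, (|c| * Real.exp (-(k * a)) + D a) := by
      apply intervalIntegral.integral_mono_on hT (hΦc.abs.intervalIntegrable 0 T)
        (((continuous_const.mul hexpc).add hDc).intervalIntegrable 0 T)
      exact fun x hx => hptw x hx.1
    have hsplit2 : (∫ a in (0:ℝ)..T, (|c| * Real.exp (-(k * a)) + D a)) =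
        |c| * (∫ a in (0:ℝ)..T, Real.exp (-(k * a))) + ∫ a in (0:ℝ)..T, D a := by
      rw [intervalIntegral.integral_add (f := fun a => |c| * Real.exp (-(k * a))) ((continuous_const.mul hexpc).intervalIntegrable 0 T)
        (hDc.intervalIntegrable 0 T), intervalIntegral.integral_const_mul]
    have h1 : |c| * (∫ a in (0:ℝ)..T, Real.exp (-(k * a))) ≤ |c| * (1 / k) :=
      mul_le_mul_of_nonneg_left hexpint (abs_nonneg _)
    have h2 := hDint T hT
    have h3 : (|c| + ∫ s in Ici (0:ℝ), |ψ s|) / k =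
        |c| * (1 / k) + (∫ s in Ici (0:ℝ), |ψ s|) / k := by ring
    rw [h3]
    linarith
  have hΦint : IntegrableOn Φ (Ioi 0) := by
    apply integrableOn_Ioi_of_intervalIntegral_norm_bounded
      ((|c| + ∫ s in Ici (0:ℝ), |ψ s|) / k) 0
      (fun i => hΦc.integrableOn_Ioc) Filter.tendsto_id
    filter_upwards [Filter.eventually_ge_atTop (0:ℝ)] with i hi
    simpa [Real.norm_eq_abs] using hIT i hi
  have hφint : IntegrableOn φ (Ici 0) := by
    rw [integrableOn_Ici_iff_integrableOn_Ioi]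
    exact hΦint.congr_fun (fun x hx => (heq (mem_Ici.2 (le_of_lt hx))).symm) measurableSet_Ioi
  refine ⟨by rw [hφ 0]; simp, ?_, ?_, hφint, ?_⟩
  · intro a ha
    have hd := (hΦd a).hasDerivWithinAt (s := Ici 0)
    have h2 : ψ a - (μ a + l) * φ a = ψ₁ a - μ₁ a * Φ a := by
      rw [hψ₁eq a ha, hμ₁eq a ha, hφΦ a ha]
    rw [h2]
    exact hd.congr heq (hφΦ a ha)
  · exact hψc.sub ((hμc.add continuousOn_const).mul hφcont)
  · have habs : (∫ a in Ici (0:ℝ), |φ a|) = ∫ a in Ioi (0:ℝ), |Φ a| := by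
      rw [integral_Ici_eq_integral_Ioi]
      apply setIntegral_congr_fun measurableSet_Ioi
      intro x hx
      simp [heq (mem_Ici.2 (le_of_lt hx))]
    rw [habs]
    have htend := intervalIntegral_tendsto_integral_Ioi 0 hΦint.abs Filter.tendsto_id
    apply le_of_tendsto htend
    filter_upwards [Filter.eventually_ge_atTop (0:ℝ)] with i hi using hIT i hi
end

section
/- Let μ_S > 0, R > 1, and let h : [0,∞) → [0,∞) be measurable with ∫_0^∞ h(a) da = r, where 0 < r < ∞. Then there is no complex number λ with Re λ ≥ 0 such that (λ + μ_S·R)/(λ + μ_S) = (1/r)·∫_0^∞ h(a)·exp(−λa) da. -/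
open MeasureTheory Real Set

/-- **No characteristic root with nonnegative real part at the endemic
equilibrium `E₁`.** If `μ_S > 0`, `R > 1` and `∫_0^∞ h = r > 0`, then no
complex `λ` with `Re λ ≥ 0` satisfies
`(λ + μ_S R)/(λ + μ_S) = (1/r) ∫_0^∞ h(a) e^{-λ a} da`. -/
theorem no_characteristic_root_endemic (μS R r : ℝ)
    (hμS : 0 < μS) (hR : 1 < R) (hr : 0 < r)
    (h : ℝ → ℝ) (hmeas : Measurable h) (hnn : ∀ a, 0 ≤ h a)
    (hint : IntegrableOn h (Ici 0))
    (hsum : (∫ a in Ici (0:ℝ), h a) = r) :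
    ¬ ∃ l : ℂ, 0 ≤ l.re ∧
      (l + (μS : ℂ) * R) / (l + μS) =
        (1 / (r : ℂ)) * ∫ a in Ici (0:ℝ), (h a : ℂ) * Complex.exp (-l * a) := by
  rintro ⟨l, hre, heq⟩
  -- Bound the norm of the integral by r
  have hbound : ∀ a ∈ Ici (0:ℝ), ‖(h a : ℂ) * Complex.exp (-l * a)‖ ≤ h a := by
    intro a ha
    rw [norm_mul, Complex.norm_real, Real.norm_of_nonneg (hnn a),
      Complex.norm_exp]
    have : (-l * a).re = -(l.re * a) := by simp [Complex.mul_re]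
    rw [this]
    have hle : Real.exp (-(l.re * a)) ≤ 1 := by
      apply Real.exp_le_one_iff.mpr
      have := mul_nonneg hre (mem_Ici.mp ha)
      linarith
    nlinarith [hnn a]
  have hnorm_int : ‖∫ a in Ici (0:ℝ), (h a : ℂ) * Complex.exp (-l * a)‖ ≤ r := by
    calc ‖∫ a in Ici (0:ℝ), (h a : ℂ) * Complex.exp (-l * a)‖
        ≤ ∫ a in Ici (0:ℝ), ‖(h a : ℂ) * Complex.exp (-l * a)‖ :=
          norm_integral_le_integral_norm _
      _ ≤ ∫ a in Ici (0:ℝ), h a := by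
          apply setIntegral_mono_on _ hint measurableSet_Ici hbound
          · apply hint.norm.mono'
              (((Complex.measurable_ofReal.comp hmeas).mul
                (Complex.continuous_exp.measurable.comp
                  (measurable_const.mul Complex.measurable_ofReal))).norm.aestronglyMeasurable)
            filter_upwards [ae_restrict_mem measurableSet_Ici] with a ha
            simpa [Function.comp, Real.norm_of_nonneg (hnn a)] using hbound a ha
      _ = r := hsum
  -- RHS has norm ≤ 1
  have hRHS : ‖(1 / (r : ℂ)) * ∫ a in Ici (0:ℝ), (h a : ℂ) * Complex.exp (-l * a)‖ ≤ 1 := by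
    rw [norm_mul, norm_div, norm_one, Complex.norm_real, Real.norm_of_nonneg hr.le]
    rw [div_mul_eq_mul_div, one_mul, div_le_one hr]
    exact hnorm_int
  -- LHS has norm > 1
  have hden : l + (μS : ℂ) ≠ 0 := by
    intro hc
    have : (l + (μS : ℂ)).re = 0 := by rw [hc]; simp
    simp [Complex.add_re] at this
    linarith
  have hlt : ‖l + (μS : ℂ)‖ < ‖l + (μS : ℂ) * R‖ := by
    have h1 : Complex.normSq (l + (μS : ℂ)) < Complex.normSq (l + (μS : ℂ) * R) := by
      simp only [Complex.normSq_apply, Complex.add_re, Complex.add_im, Complex.mul_re,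
        Complex.mul_im, Complex.ofReal_re, Complex.ofReal_im]
      nlinarith [mul_pos hμS (sub_pos.mpr hR), mul_nonneg hre (mul_pos hμS (sub_pos.mpr hR)).le, sq_nonneg μS, mul_pos hμS hμS]
    have := Real.sqrt_lt_sqrt (Complex.normSq_nonneg _) h1
    simpa [Complex.norm_def] using this
  have hLHS : 1 < ‖(l + (μS : ℂ) * R) / (l + μS)‖ := by
    rw [norm_div]
    rw [lt_div_iff₀ (norm_pos_iff.mpr hden), one_mul]
    exact hlt
  rw [heq] at hLHS
  linarith
end

section
/- Assume the two-strain SI model hypotheses. If max{R_0^x, R_0^y} ≤ 1, then the only equilibrium of the two-strain SI system is E_0 = (Λ/μ_S, 0, 0). -/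
open MeasureTheory Real Set

/-- Survival probability `π(a) = exp(-∫_0^a μ)`. -/
noncomputable def survival (μ : ℝ → ℝ) (a : ℝ) : ℝ :=
  Real.exp (-(∫ s in (0:ℝ)..a, μ s))

/-- An equilibrium of the two-strain infection-age structured SI system:
`S ≥ 0`, `x, y ≥ 0` are continuously differentiable on `[0,∞)` with
`x' = -μₓ x`, `y' = -μ_y y`, renewal boundary conditions
`x 0 = S ∫ βₓ x`, `y 0 = S ∫ β_y y`, and the balance `Λ = μ_S S + x 0 + y 0`. -/
def IsEquilibrium (Λ μS : ℝ) (μx μy βx βy : ℝ → ℝ)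
    (S : ℝ) (x y : ℝ → ℝ) : Prop :=
  0 ≤ S ∧ (∀ a, 0 ≤ a → 0 ≤ x a) ∧ (∀ a, 0 ≤ a → 0 ≤ y a) ∧
  (∀ a, 0 ≤ a → HasDerivWithinAt x (-(μx a) * x a) (Ici 0) a) ∧
  (∀ a, 0 ≤ a → HasDerivWithinAt y (-(μy a) * y a) (Ici 0) a) ∧
  x 0 = S * ∫ a in Ici (0:ℝ), βx a * x a ∧
  y 0 = S * ∫ a in Ici (0:ℝ), βy a * y a ∧
  Λ = μS * S + x 0 + y 0

/-- Solution of the linear ODE `x' = -μ x` on `[0,∞)`. -/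
lemma ode_solution (μ x : ℝ → ℝ) (hμc : ContinuousOn μ (Ici 0))
    (hx : ∀ a, 0 ≤ a → HasDerivWithinAt x (-(μ a) * x a) (Ici 0) a) :
    ∀ a, 0 ≤ a → x a = x 0 * survival μ a := by
  intro a0 ha0
  set I : ℝ → ℝ := fun t => ∫ s in (0:ℝ)..t, μ s with hIdef
  have hxc : ContinuousOn x (Ici 0) := fun t ht => (hx t ht).continuousWithinAt
  have hμint : ∀ t : ℝ, 0 ≤ t → IntervalIntegrable μ volume 0 t := by
    intro t ht
    refine (hμc.mono ?_).intervalIntegrable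
    rw [uIcc_of_le ht]; exact Icc_subset_Ici_self
  have hId : ∀ t : ℝ, 0 ≤ t → HasDerivWithinAt I (μ t) (Ici t) t := by
    intro t ht
    refine intervalIntegral.integral_hasDerivWithinAt_right (hμint t ht) ?_ ?_
    · exact ⟨Ici 0, Filter.mem_of_superset self_mem_nhdsWithin
        (fun u hu => le_of_lt (lt_of_le_of_lt ht hu)), hμc.aestronglyMeasurable measurableSet_Ici⟩
    · exact (hμc t ht).mono (fun u hu => le_of_lt (lt_of_le_of_lt ht hu))
  have hIc : ContinuousOn I (Icc 0 a0) := by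
    have h := intervalIntegral.continuousOn_primitive_interval
      (a := (0:ℝ)) (b := a0) (μ := volume) (f := μ)
      (by rw [uIcc_of_le ha0]
          exact ((hμc.mono Icc_subset_Ici_self).integrableOn_compact isCompact_Icc))
    rwa [uIcc_of_le ha0] at h
  set h : ℝ → ℝ := fun t => x t * Real.exp (I t) with hhdef
  have hconst : ∀ t ∈ Icc (0:ℝ) a0, h t = h 0 := by
    refine constant_of_has_deriv_right_zero ?_ ?_
    · exact (hxc.mono Icc_subset_Ici_self).mul (Real.continuous_exp.comp_continuousOn hIc)
    · intro t ht
      have hxd : HasDerivWithinAt x (-(μ t) * x t) (Ici t) t :=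
        (hx t ht.1).mono (Ici_subset_Ici.2 ht.1)
      have hed : HasDerivWithinAt (fun u => Real.exp (I u)) (Real.exp (I t) * μ t) (Ici t) t :=
        (hId t ht.1).exp
      have := hxd.mul hed
      convert this using 1
      case e'_4 => rfl
      case e'_8 => rfl
      case e'_9 => ring
  have h0 : h 0 = x 0 := by
    simp [hhdef, hIdef, intervalIntegral.integral_same]
  have ha := hconst a0 ⟨ha0, le_refl _⟩
  rw [h0] at ha
  have hexp : Real.exp (I a0) ≠ 0 := Real.exp_ne_zero _
  have : x a0 = x 0 / Real.exp (I a0) := by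
    rw [eq_div_iff hexp]
    exact ha
  rw [this, survival, Real.exp_neg]
  field_simp
  rfl

/-- Key computation: for such a solution the renewal integral factors. -/
lemma renewal_integral (μ β x : ℝ → ℝ) (r : ℝ)
    (hr : r = ∫ a in Ici (0:ℝ), β a * survival μ a)
    (hsol : ∀ a, 0 ≤ a → x a = x 0 * survival μ a) :
    (∫ a in Ici (0:ℝ), β a * x a) = x 0 * r := by
  rw [hr, ← integral_const_mul]
  refine setIntegral_congr_fun measurableSet_Ici ?_
  intro a ha
  simp only
  rw [hsol a ha]
  ring

/-- **If `max{R₀ˣ, R₀ʸ} ≤ 1` the disease-free equilibrium `E₀` is the only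
equilibrium of the two-strain SI system.** -/
theorem equilibria_disease_free_only (Λ μS μ0 : ℝ) (μx μy βx βy : ℝ → ℝ)
    (hΛ : 0 < Λ) (hμS : 0 < μS) (hμ0 : 0 < μ0) (hμSμ0 : μ0 ≤ μS)
    (hμxc : ContinuousOn μx (Ici 0)) (hμyc : ContinuousOn μy (Ici 0))
    (hμxb : ∀ a, 0 ≤ a → μ0 ≤ μx a) (hμyb : ∀ a, 0 ≤ a → μ0 ≤ μy a)
    (hβxm : Measurable βx) (hβym : Measurable βy)
    (hβxnn : ∀ a, 0 ≤ βx a) (hβynn : ∀ a, 0 ≤ βy a)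
    (Mx My : ℝ) (hβxM : ∀ a, βx a ≤ Mx) (hβyM : ∀ a, βy a ≤ My)
    (rx ry : ℝ)
    (hrx : rx = ∫ a in Ici (0:ℝ), βx a * survival μx a)
    (hry : ry = ∫ a in Ici (0:ℝ), βy a * survival μy a)
    (hrxpos : 0 < rx) (hrypos : 0 < ry)
    (R0x R0y : ℝ) (hR0x : R0x = Λ * rx / μS) (hR0y : R0y = Λ * ry / μS)
    (hR : max R0x R0y ≤ 1) :
    IsEquilibrium Λ μS μx μy βx βy (Λ / μS) (fun _ => 0) (fun _ => 0) ∧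
    ∀ S x y, IsEquilibrium Λ μS μx μy βx βy S x y →
      S = Λ / μS ∧ (∀ a, 0 ≤ a → x a = 0) ∧ (∀ a, 0 ≤ a → y a = 0) := by
  have hRx : Λ * rx ≤ μS := by
    have := le_trans (le_max_left R0x R0y) hR
    rw [hR0x, div_le_one hμS] at this
    exact this
  have hRy : Λ * ry ≤ μS := by
    have := le_trans (le_max_right R0x R0y) hR
    rw [hR0y, div_le_one hμS] at this
    exact this
  constructor
  · refine ⟨by positivity, fun a _ => le_refl 0, fun a _ => le_refl 0, ?_, ?_, by simp, by simp,
      by field_simp; ring⟩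
    · intro a _
      simpa using hasDerivWithinAt_const a (Ici (0:ℝ)) (0:ℝ)
    · intro a _
      simpa using hasDerivWithinAt_const a (Ici (0:ℝ)) (0:ℝ)
  · rintro S x y ⟨hS, hxnn, hynn, hxd, hyd, hxb, hyb, hbal⟩
    have hxsol := ode_solution μx x hμxc hxd
    have hysol := ode_solution μy y hμyc hyd
    rw [renewal_integral μx βx x rx hrx hxsol] at hxb
    rw [renewal_integral μy βy y ry hry hysol] at hyb
    have hx0 : x 0 = 0 := by
      by_contra h0
      have hx0pos : 0 < x 0 := lt_of_le_of_ne (hxnn 0 le_rfl) (Ne.symm h0)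
      have hSrx : S * rx = 1 := by
        have : x 0 * (S * rx) = x 0 * 1 := by rw [mul_one]; linarith [hxb]; 
        exact mul_left_cancel₀ h0 this
      have hy0 : 0 ≤ y 0 := hynn 0 le_rfl
      nlinarith [mul_pos hx0pos hrxpos, mul_nonneg hy0 hrxpos.le,
        mul_le_mul_of_nonneg_right hbal.le hrxpos.le]
    have hy0 : y 0 = 0 := by
      by_contra h0
      have hy0pos : 0 < y 0 := lt_of_le_of_ne (hynn 0 le_rfl) (Ne.symm h0)
      have hSry : S * ry = 1 := by
        have : y 0 * (S * ry) = y 0 * 1 := by rw [mul_one]; linarith [hyb]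
        exact mul_left_cancel₀ h0 this
      have hx0' : 0 ≤ x 0 := hxnn 0 le_rfl
      nlinarith [mul_pos hy0pos hrypos, mul_nonneg hx0' hrypos.le,
        mul_le_mul_of_nonneg_right hbal.le hrypos.le]
    refine ⟨?_, ?_, ?_⟩
    · rw [hx0, hy0] at hbal
      field_simp
      linarith
    · intro a ha; rw [hxsol a ha, hx0, zero_mul]
    · intro a ha; rw [hysol a ha, hy0, zero_mul]
end

section
/- Assume the two-strain SI model hypotheses. If R_0^x ≤ 1 < R_0^y, then the set of equilibria of the two-strain SI system is exactly {E_0, E_2}, where E_0 = (Λ/μ_S, 0, 0) and E_2 = (1/r_y, 0, a ↦ (μ_S(R_0^y − 1)/r_y)·π_y(a)). -/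
open MeasureTheory Real Set

lemma survival_zero (μ : ℝ → ℝ) : survival μ 0 = 1 := by
  unfold survival
  simp

lemma F_hasDeriv (μ : ℝ → ℝ) (hμ : ContinuousOn μ (Ici 0)) {a : ℝ} (ha : 0 ≤ a) :
    HasDerivWithinAt (fun b => ∫ s in (0:ℝ)..b, μ s) (μ a) (Ici 0) a := by
  have hint : IntervalIntegrable μ volume 0 a := by
    apply ContinuousOn.intervalIntegrable
    apply hμ.mono
    rw [uIcc_of_le ha]
    exact Icc_subset_Ici_self
  have hmeas : AEStronglyMeasurable μ (volume.restrict (Ici (0:ℝ))) :=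
    hμ.aestronglyMeasurable measurableSet_Ici
  rcases eq_or_lt_of_le ha with h0 | h0
  · subst h0
    have hmem : Ici (0:ℝ) ∈ nhdsWithin (0:ℝ) (Ioi 0) :=
      Filter.mem_of_superset self_mem_nhdsWithin Ioi_subset_Ici_self
    exact intervalIntegral.integral_hasDerivWithinAt_right hint
      ⟨Ici 0, hmem, hmeas⟩ ((hμ 0 self_mem_Ici).mono Ioi_subset_Ici_self)
  · have hmem : Ici (0:ℝ) ∈ nhds a := Ici_mem_nhds h0
    exact (intervalIntegral.integral_hasDerivAt_right hint ⟨Ici 0, hmem, hmeas⟩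
      ((hμ a (le_of_lt h0)).continuousAt hmem)).hasDerivWithinAt

lemma survival_hasDeriv (μ : ℝ → ℝ) (hμ : ContinuousOn μ (Ici 0)) {a : ℝ} (ha : 0 ≤ a) :
    HasDerivWithinAt (survival μ) (-(μ a) * survival μ a) (Ici 0) a := by
  have h := ((F_hasDeriv μ hμ ha).neg).exp
  convert h using 1
  · rfl
  · unfold survival
    simp only [Pi.neg_apply]
    ring

lemma ode_unique (μ : ℝ → ℝ) (hμ : ContinuousOn μ (Ici 0)) (x : ℝ → ℝ)
    (hx : ∀ a, 0 ≤ a → HasDerivWithinAt x (-(μ a) * x a) (Ici 0) a)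
    {a : ℝ} (ha : 0 ≤ a) : x a = x 0 * survival μ a := by
  set F : ℝ → ℝ := fun b => ∫ s in (0:ℝ)..b, μ s with hFdef
  have key : ∀ b ∈ Icc (0:ℝ) a, x b * Real.exp (F b) = x 0 * Real.exp (F 0) := by
    apply constant_of_has_deriv_right_zero
    · apply ContinuousOn.mul
      · intro b hb
        exact ((hx b hb.1).continuousWithinAt).mono (fun t ht => ht.1)
      · apply Real.continuous_exp.comp_continuousOn
        have hint : IntegrableOn μ (uIcc (0:ℝ) a) volume := by
          rw [uIcc_of_le ha]
          exact (hμ.mono Icc_subset_Ici_self).integrableOn_Icc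
        have := intervalIntegral.continuousOn_primitive_interval hint
        rw [uIcc_of_le ha] at this
        exact this
    · intro b hb
      have hsub : Ici b ⊆ Ici (0:ℝ) := Ici_subset_Ici.mpr hb.1
      have h1 : HasDerivWithinAt x (-(μ b) * x b) (Ici b) b := (hx b hb.1).mono hsub
      have h2 : HasDerivWithinAt F (μ b) (Ici b) b := (F_hasDeriv μ hμ hb.1).mono hsub
      have := h1.mul h2.exp
      exact this.congr_deriv (by ring)
  have h := key a ⟨ha, le_refl a⟩
  have hF0 : F 0 = 0 := intervalIntegral.integral_same
  rw [hF0, Real.exp_zero, mul_one] at h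
  have hs : survival μ a = Real.exp (-(F a)) := rfl
  rw [hs, Real.exp_neg, ← h]
  field_simp

lemma integral_boundary (β x s : ℝ → ℝ) (c : ℝ)
    (h : ∀ a, 0 ≤ a → x a = c * s a) :
    ∫ a in Ici (0:ℝ), β a * x a = c * ∫ a in Ici (0:ℝ), β a * s a := by
  rw [← integral_const_mul]
  apply setIntegral_congr_fun measurableSet_Ici
  intro a ha
  show β a * x a = c * (β a * s a)
  rw [h a (mem_Ici.mp ha)]
  ring

/-- **If `R₀ˣ ≤ 1 < R₀ʸ`, the set of equilibria of the two-strain SI system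
is exactly `{E₀, E₂}`.** -/
theorem equilibria_E0_E2 (Λ μS μ0 : ℝ) (μx μy βx βy : ℝ → ℝ)
    (hΛ : 0 < Λ) (hμS : 0 < μS) (hμ0 : 0 < μ0) (hμSμ0 : μ0 ≤ μS)
    (hμxc : ContinuousOn μx (Ici 0)) (hμyc : ContinuousOn μy (Ici 0))
    (hμxb : ∀ a, 0 ≤ a → μ0 ≤ μx a) (hμyb : ∀ a, 0 ≤ a → μ0 ≤ μy a)
    (hβxm : Measurable βx) (hβym : Measurable βy)
    (hβxnn : ∀ a, 0 ≤ βx a) (hβynn : ∀ a, 0 ≤ βy a)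
    (Mx My : ℝ) (hβxM : ∀ a, βx a ≤ Mx) (hβyM : ∀ a, βy a ≤ My)
    (rx ry : ℝ)
    (hrx : rx = ∫ a in Ici (0:ℝ), βx a * survival μx a)
    (hry : ry = ∫ a in Ici (0:ℝ), βy a * survival μy a)
    (hrxpos : 0 < rx) (hrypos : 0 < ry)
    (R0x R0y : ℝ) (hR0x : R0x = Λ * rx / μS) (hR0y : R0y = Λ * ry / μS)
    (R0x R0y : ℝ) (hR0x : R0x = Λ * rx / μS) (hR0y : R0y = Λ * ry / μS)
    (hRx : R0x ≤ 1) (hRy : 1 < R0y) :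
    IsEquilibrium Λ μS μx μy βx βy (Λ / μS) (fun _ => 0) (fun _ => 0) ∧
    IsEquilibrium Λ μS μx μy βx βy (1 / ry)
      (fun _ => 0) (fun a => μS * (R0y - 1) / ry * survival μy a) ∧
    ∀ S x y, IsEquilibrium Λ μS μx μy βx βy S x y →
      (S = Λ / μS ∧ (∀ a, 0 ≤ a → x a = 0) ∧ (∀ a, 0 ≤ a → y a = 0)) ∨
      (S = 1 / ry ∧ (∀ a, 0 ≤ a → x a = 0) ∧
        (∀ a, 0 ≤ a → y a = μS * (R0y - 1) / ry * survival μy a)) := by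
  have hc : 0 < μS * (R0y - 1) / ry :=
    div_pos (mul_pos hμS (sub_pos.mpr hRy)) hrypos
  refine ⟨?_, ?_, ?_⟩
  · -- E0 is an equilibrium
    refine ⟨le_of_lt (div_pos hΛ hμS), fun a _ => le_refl 0, fun a _ => le_refl 0,
      ?_, ?_, ?_, ?_, ?_⟩
    · intro a ha
      simpa using hasDerivWithinAt_const a (Ici (0:ℝ)) (0:ℝ)
    · intro a ha
      simpa using hasDerivWithinAt_const a (Ici (0:ℝ)) (0:ℝ)
    · simp
    · simp
    · field_simp
      ring
  · -- E2 is an equilibrium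
    set c := μS * (R0y - 1) / ry with hcdef
    have hIy : ∫ a in Ici (0:ℝ), βy a * (c * survival μy a) = c * ry := by
      rw [hry]
      exact integral_boundary βy _ (survival μy) c (fun a _ => rfl)
    refine ⟨le_of_lt (div_pos one_pos hrypos), fun a _ => le_refl 0,
      fun a ha => mul_nonneg (le_of_lt hc) (le_of_lt (Real.exp_pos _)),
      ?_, ?_, ?_, ?_, ?_⟩
    · intro a ha
      simpa using hasDerivWithinAt_const a (Ici (0:ℝ)) (0:ℝ)
    · intro a ha
      have := (survival_hasDeriv μy hμyc ha).const_mul c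
      exact this.congr_deriv (by ring)
    · simp
    · show c * survival μy 0 = 1 / ry * ∫ a in Ici (0:ℝ), βy a * (c * survival μy a)
      rw [survival_zero, hIy]
      field_simp
    · show Λ = μS * (1 / ry) + 0 + c * survival μy 0
      rw [survival_zero, hcdef, hR0y]
      field_simp
      ring
  · -- uniqueness
    rintro S x y ⟨hS, hxnn, hynn, hxd, hyd, hxb, hyb, hbal⟩
    have hxs : ∀ a, 0 ≤ a → x a = x 0 * survival μx a :=
      fun a ha => ode_unique μx hμxc x hxd ha
    have hys : ∀ a, 0 ≤ a → y a = y 0 * survival μy a :=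
      fun a ha => ode_unique μy hμyc y hyd ha
    have hIx : ∫ a in Ici (0:ℝ), βx a * x a = x 0 * rx := by
      rw [hrx]; exact integral_boundary βx x (survival μx) (x 0) hxs
    have hIy : ∫ a in Ici (0:ℝ), βy a * y a = y 0 * ry := by
      rw [hry]; exact integral_boundary βy y (survival μy) (y 0) hys
    rw [hIx] at hxb
    rw [hIy] at hyb
    -- x 0 = 0
    have hx0 : x 0 = 0 := by
      by_contra hne
      have hx0pos : 0 < x 0 := lt_of_le_of_ne (hxnn 0 (le_refl 0)) (Ne.symm hne)
      have hfac : x 0 * (S * rx - 1) = 0 := by linear_combination -hxb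
      have hSrx : S * rx = 1 := by
        rcases mul_eq_zero.mp hfac with h | h
        · exact absurd h hne
        · linarith
      have hΛrx : Λ * rx ≤ μS := by
        rw [hR0x] at hRx
        exact (div_le_one hμS).mp hRx
      have hy0 : 0 ≤ y 0 := hynn 0 (le_refl 0)
      nlinarith [hbal, hSrx, hΛrx, hrxpos, hx0pos, hy0]
    have hxzero : ∀ a, 0 ≤ a → x a = 0 := by
      intro a ha
      rw [hxs a ha, hx0, zero_mul]
    rcases eq_or_lt_of_le (hynn 0 (le_refl 0)) with hy0 | hy0pos
    · -- y 0 = 0 : E0 case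
      left
      have hS' : S = Λ / μS := by
        rw [hx0, ← hy0] at hbal
        rw [eq_div_iff (ne_of_gt hμS)]
        linarith
      exact ⟨hS', hxzero, fun a ha => by rw [hys a ha, ← hy0, zero_mul]⟩
    · -- y 0 > 0 : E2 case
      right
      have hfac : y 0 * (S * ry - 1) = 0 := by linear_combination -hyb
      have hSry : S * ry = 1 := by
        rcases mul_eq_zero.mp hfac with h | h
        · exact absurd h (ne_of_gt hy0pos)
        · linarith
      have hS' : S = 1 / ry := by
        field_simp
        linarith
      have hy0val : y 0 = μS * (R0y - 1) / ry := by
        rw [hx0, hS'] at hbal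
        rw [hR0y]
        field_simp
        field_simp at hbal
        linarith
      exact ⟨hS', hxzero, fun a ha => by rw [hys a ha, hy0val]⟩
end

section
/- Let μ_0 > 0, let μ : [0,∞) → ℝ be continuous with μ(a) ≥ μ_0 for all a, let β : [0,∞) → [0,∞) be continuous and bounded, set π(a) = exp(−∫_0^a μ(s) ds) and r = ∫_0^∞ β(a)π(a) da with 0 < r < ∞, and define Ψ(a) = (1/r)·∫_a^∞ β(s)·exp(−∫_a^s μ(ξ) dξ) ds. Let y : [0,∞) → ℝ be continuously differentiable with both y and y' integrable on [0,∞). Then ∫_0^∞ Ψ(a)·(y'(a) + μ(a)·y(a)) da = (1/r)·∫_0^∞ β(a)·y(a) da − y(0). -/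
open MeasureTheory Real Set

private lemma limit_eq_zero_of_integrableOn {y : ℝ → ℝ} {L : ℝ}
    (hy : Filter.Tendsto y Filter.atTop (nhds L)) (hint : IntegrableOn y (Ici (0:ℝ))) :
    L = 0 := by
  by_contra hL
  have hε : 0 < |L| / 2 := by positivity
  obtain ⟨N, hN⟩ := (Metric.tendsto_atTop.mp hy (|L| / 2) hε)
  set A : ℝ := max N 0 with hA
  have hconst : Integrable (fun _ : ℝ => |L| / 2) (volume.restrict (Ici A)) := by
    refine Integrable.mono' ((hint.mono_set (Ici_subset_Ici.2 (le_max_right N 0))).norm)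
      aestronglyMeasurable_const ?_
    refine (ae_restrict_iff' measurableSet_Ici).2 (ae_of_all _ fun a ha => ?_)
    have h1 := hN a (le_trans (le_max_left N 0) ha)
    have h2 : |y a - L| < |L| / 2 := by simpa [Real.dist_eq] using h1
    have h3 : |L| - |y a| ≤ |y a - L| := by
      have := abs_sub_abs_le_abs_sub L (y a)
      simpa [abs_sub_comm] using this
    have hle : |L| / 2 ≤ |y a| := by linarith
    have : ‖(|L| / 2 : ℝ)‖ = |L| / 2 := by
      rw [norm_eq_abs, abs_of_nonneg (by positivity)]
    rw [this]
    simpa using hle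
  rw [integrable_const_iff] at hconst
  rcases hconst with h | h
  · have : |L| = 0 := by linarith [abs_nonneg L]
    exact hL (abs_eq_zero.mp this)
  · rw [isFiniteMeasure_restrict, Real.volume_Ici] at h
    exact (h rfl).elim

/-- **Integration-by-parts identity for the Lyapunov weight `Ψ`.**
If `y` is continuously differentiable on `[0,∞)` with `y` and `y'` integrable,
then `∫_0^∞ Ψ(a)(y'(a) + μ(a) y(a)) da = (1/r) ∫_0^∞ β(a) y(a) da - y 0`. -/
theorem weight_integration_by_parts (μ0 M : ℝ) (hμ0 : 0 < μ0)
    (μ β : ℝ → ℝ)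
    (hμc : ContinuousOn μ (Ici 0)) (hμb : ∀ a, 0 ≤ a → μ0 ≤ μ a)
    (hβc : ContinuousOn β (Ici 0)) (hβnn : ∀ a, 0 ≤ a → 0 ≤ β a)
    (hβM : ∀ a, 0 ≤ a → β a ≤ M)
    (r : ℝ)
    (hr : r = ∫ a in Ici (0:ℝ), β a * Real.exp (-(∫ s in (0:ℝ)..a, μ s)))
    (hrpos : 0 < r)
    (Ψ : ℝ → ℝ)
    (hΨ : ∀ a, Ψ a = (1 / r) * ∫ s in Ici a, β s * Real.exp (-(∫ ξ in a..s, μ ξ)))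
    (y y' : ℝ → ℝ)
    (hy : ∀ a, 0 ≤ a → HasDerivWithinAt y (y' a) (Ici 0) a)
    (hy'c : ContinuousOn y' (Ici 0))
    (hyint : IntegrableOn y (Ici 0)) (hy'int : IntegrableOn y' (Ici 0)) :
    ∫ a in Ici (0:ℝ), Ψ a * (y' a + μ a * y a) =
      (1 / r) * (∫ a in Ici (0:ℝ), β a * y a) - y 0 := by
  have hM0 : (0:ℝ) ≤ M := le_trans (hβnn 0 le_rfl) (hβM 0 le_rfl)
  -- interval integrability of continuous-on-Ici-0 functions
  have hII : ∀ (f : ℝ → ℝ), ContinuousOn f (Ici 0) → ∀ u v : ℝ, 0 ≤ u → 0 ≤ v →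
      IntervalIntegrable f volume u v := by
    intro f hf u v hu hv
    apply ContinuousOn.intervalIntegrable
    apply hf.mono
    intro x hx
    rcases le_total u v with h | h
    · rw [uIcc_of_le h] at hx; exact le_trans hu hx.1
    · rw [uIcc_of_ge h] at hx; exact le_trans hv hx.1
  -- FTC-1 within Ici 0
  have FTC : ∀ (f : ℝ → ℝ), ContinuousOn f (Ici 0) → ∀ a, 0 ≤ a →
      HasDerivWithinAt (fun u => ∫ x in (0:ℝ)..u, f x) (f a) (Ici 0) a := by
    intro f hf a ha
    rcases eq_or_lt_of_le ha with rfl | hpos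
    · have hmeas : StronglyMeasurableAtFilter f (nhdsWithin 0 (Ioi 0)) volume := by
        refine AEStronglyMeasurable.stronglyMeasurableAtFilter_of_mem
          (hf.aestronglyMeasurable measurableSet_Ici) ?_
        exact Filter.mem_of_superset self_mem_nhdsWithin Ioi_subset_Ici_self
      exact intervalIntegral.integral_hasDerivWithinAt_right
        (hII f hf 0 0 le_rfl le_rfl) hmeas ((hf 0 self_mem_Ici).mono Ioi_subset_Ici_self)
    · have hmem : Ici (0:ℝ) ∈ nhds a := Ici_mem_nhds hpos
      have hmeas : StronglyMeasurableAtFilter f (nhds a) volume :=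
        AEStronglyMeasurable.stronglyMeasurableAtFilter_of_mem
          (hf.aestronglyMeasurable measurableSet_Ici) hmem
      exact (intervalIntegral.integral_hasDerivAt_right (hII f hf 0 a le_rfl ha)
        hmeas ((hf a ha).continuousAt hmem)).hasDerivWithinAt
  set A : ℝ → ℝ := fun a => ∫ s in (0:ℝ)..a, μ s with hAdef
  have hA : ∀ a, 0 ≤ a → HasDerivWithinAt A (μ a) (Ici 0) a := FTC μ hμc
  have hAc : ContinuousOn A (Ici 0) := fun a ha => (hA a ha).continuousWithinAt
  have hAsub : ∀ a s : ℝ, 0 ≤ a → 0 ≤ s → (∫ ξ in a..s, μ ξ) = A s - A a := by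
    intro a s ha hs
    exact (intervalIntegral.integral_interval_sub_left
      (hII μ hμc 0 s le_rfl hs) (hII μ hμc 0 a le_rfl ha)).symm
  have hAlb : ∀ u v : ℝ, 0 ≤ u → u ≤ v → μ0 * (v - u) ≤ A v - A u := by
    intro u v hu huv
    have hv : 0 ≤ v := le_trans hu huv
    rw [← hAsub u v hu hv]
    have h1 : ∫ ξ in u..v, μ0 ≤ ∫ ξ in u..v, μ ξ := by
      apply intervalIntegral.integral_mono_on huv intervalIntegrable_const
        (hII μ hμc u v hu hv)
      intro x hx
      exact hμb x (le_trans hu hx.1)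
    rw [intervalIntegral.integral_const] at h1
    calc μ0 * (v - u) = (v - u) • μ0 := by rw [smul_eq_mul]; ring
      _ ≤ _ := h1
  set g : ℝ → ℝ := fun s => β s * Real.exp (-A s) with hgdef
  have hgc : ContinuousOn g (Ici 0) :=
    hβc.mul (Real.continuous_exp.comp_continuousOn hAc.neg)
  have hgnn : ∀ s, 0 ≤ s → 0 ≤ g s := fun s hs =>
    mul_nonneg (hβnn s hs) (Real.exp_pos _).le
  have hgint : IntegrableOn g (Ici 0) := by
    have hdecay : IntegrableOn (fun s => M * Real.exp (-(μ0 * s))) (Ici 0) := by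
      have := (exp_neg_integrableOn_Ioi 0 hμ0).const_mul M
      rw [integrableOn_Ici_iff_integrableOn_Ioi]
      simpa [neg_mul, IntegrableOn] using this
    refine hdecay.mono' (hgc.aestronglyMeasurable measurableSet_Ici) ?_
    refine (ae_restrict_iff' measurableSet_Ici).2 (ae_of_all _ fun s hs => ?_)
    rw [norm_eq_abs, abs_of_nonneg (hgnn s hs)]
    have h1 : μ0 * s ≤ A s := by
      have := hAlb 0 s le_rfl hs
      simp only [hAdef] at this ⊢
      simpa [intervalIntegral.integral_same] using this
    exact mul_le_mul (hβM s hs) (Real.exp_le_exp.2 (by linarith)) (Real.exp_pos _).le hM0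
  set G : ℝ → ℝ := fun a => ∫ s in Ioi a, g s with hGdef
  have hGsplit : ∀ a, 0 ≤ a → G a = G 0 - ∫ s in (0:ℝ)..a, g s := by
    intro a ha
    have hsplit : (∫ s in Ioi (0:ℝ), g s) = (∫ s in Ioc 0 a, g s) + ∫ s in Ioi a, g s := by
      rw [← setIntegral_union (Ioc_disjoint_Ioi le_rfl) measurableSet_Ioi
        (hgint.mono_set (fun x hx => le_of_lt hx.1))
        (hgint.mono_set (fun x hx => le_trans ha (le_of_lt hx))),
        Ioc_union_Ioi_eq_Ioi ha]
    rw [intervalIntegral.integral_of_le ha]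
    simp only [hGdef]
    linarith
  have hGd : ∀ a, 0 ≤ a → HasDerivWithinAt G (-g a) (Ici 0) a := by
    intro a ha
    have h1 : HasDerivWithinAt (fun u => G 0 - ∫ x in (0:ℝ)..u, g x) (-g a) (Ici 0) a :=
      (FTC g hgc a ha).const_sub (G 0)
    exact h1.congr (fun x hx => hGsplit x hx) (hGsplit a ha)
  have hΨrep : ∀ a, 0 ≤ a → Ψ a = (1 / r) * (Real.exp (A a) * G a) := by
    intro a ha
    rw [hΨ a, integral_Ici_eq_integral_Ioi]
    congr 1
    rw [← integral_const_mul]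
    apply setIntegral_congr_fun measurableSet_Ioi
    intro s hs
    have hs0 : 0 ≤ s := le_trans ha (le_of_lt hs)
    simp only [hgdef]
    rw [hAsub a s ha hs0]
    rw [neg_sub, Real.exp_sub]
    rw [Real.exp_neg]
    field_simp
  have hGnn : ∀ a, 0 ≤ a → 0 ≤ G a := by
    intro a ha
    exact setIntegral_nonneg measurableSet_Ioi fun s hs => hgnn s (le_trans ha (le_of_lt hs))
  have hΨnn : ∀ a, 0 ≤ a → 0 ≤ Ψ a := by
    intro a ha
    rw [hΨrep a ha]
    have := hGnn a ha
    positivity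
  -- value of the exponential integral
  have hexpval : ∀ c : ℝ, ∫ s in Ioi c, Real.exp (-(μ0 * s)) = Real.exp (-(μ0 * c)) / μ0 := by
    intro c
    have hderiv : ∀ x ∈ Ioi c, HasDerivAt (fun s => -(1 / μ0) * Real.exp (-(μ0 * s)))
        (Real.exp (-(μ0 * x))) x := by
      intro x _
      have h1 : HasDerivAt (fun s : ℝ => -(μ0 * s)) (-μ0) x := by
        have := ((hasDerivAt_id x).const_mul μ0).neg; rw [mul_one] at this; exact this
      have h2 := (h1.exp).const_mul (-(1 / μ0))
      exact h2.congr_deriv (by rw [mul_comm (Real.exp _) (-μ0), ← mul_assoc, neg_mul_neg, one_div, inv_mul_cancel₀ hμ0.ne', one_mul])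
    have hint : IntegrableOn (fun s => Real.exp (-(μ0 * s))) (Ioi c) := by
      simpa [neg_mul] using exp_neg_integrableOn_Ioi c hμ0
    have htend : Filter.Tendsto (fun s => -(1 / μ0) * Real.exp (-(μ0 * s)))
        Filter.atTop (nhds 0) := by
      have h1 : Filter.Tendsto (fun s : ℝ => μ0 * s) Filter.atTop Filter.atTop :=
        Filter.Tendsto.const_mul_atTop hμ0 Filter.tendsto_id
      have h2 := (Real.tendsto_exp_neg_atTop_nhds_zero.comp h1).const_mul (-(1 / μ0))
      simpa using h2
    have := integral_Ioi_of_hasDerivAt_of_tendsto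
      (Continuous.continuousWithinAt (by fun_prop)) hderiv hint htend
    rw [this]
    field_simp
    ring
  have hEglb : ∀ a s : ℝ, 0 ≤ a → a ≤ s →
      Real.exp (A a) * g s ≤ (M * Real.exp (μ0 * a)) * Real.exp (-(μ0 * s)) := by
    intro a s ha has
    have hs : 0 ≤ s := le_trans ha has
    have h1 : μ0 * (s - a) ≤ A s - A a := hAlb a s ha has
    simp only [hgdef]
    rw [show Real.exp (A a) * (β s * Real.exp (-A s)) = β s * Real.exp (A a - A s) by
      rw [Real.exp_sub, Real.exp_neg]; field_simp]
    rw [show (M * Real.exp (μ0 * a)) * Real.exp (-(μ0 * s)) = M * Real.exp (μ0 * a - μ0 * s) by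
      rw [Real.exp_sub, Real.exp_neg]; field_simp]
    exact mul_le_mul (hβM s hs) (Real.exp_le_exp.2 (by nlinarith)) (Real.exp_pos _).le hM0
  set B : ℝ := (1 / r) * (M / μ0) with hBdef
  have hΨub : ∀ a, 0 ≤ a → Ψ a ≤ B := by
    intro a ha
    rw [hΨrep a ha]
    have h1 : Real.exp (A a) * G a ≤ M / μ0 := by
      have h2 : Real.exp (A a) * G a = ∫ s in Ioi a, Real.exp (A a) * g s := by
        rw [integral_const_mul]
      rw [h2]
      have h3 : (∫ s in Ioi a, Real.exp (A a) * g s) ≤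
          ∫ s in Ioi a, (M * Real.exp (μ0 * a)) * Real.exp (-(μ0 * s)) := by
        apply setIntegral_mono_on
        · exact (hgint.mono_set (fun x hx => le_trans ha (le_of_lt hx))).const_mul _
        · have h5 := (exp_neg_integrableOn_Ioi a hμ0).const_mul (M * Real.exp (μ0 * a))
          exact MeasureTheory.IntegrableOn.congr_fun h5 (fun s _ => by rw [neg_mul])
            measurableSet_Ioi
        · exact measurableSet_Ioi
        · intro s hs; exact hEglb a s ha (le_of_lt hs)
      have h4 : (∫ s in Ioi a, (M * Real.exp (μ0 * a)) * Real.exp (-(μ0 * s))) = M / μ0 := by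
        rw [integral_const_mul, hexpval a, Real.exp_neg]
        field_simp
      rw [h4] at h3
      exact h3
    rw [hBdef]
    have h1r : (0:ℝ) < 1 / r := by positivity
    calc (1 / r) * (Real.exp (A a) * G a) ≤ (1 / r) * (M / μ0) := by
          apply mul_le_mul_of_nonneg_left h1 h1r.le
      _ = B := rfl
  have hBnn : 0 ≤ B := by rw [hBdef]; positivity
  -- derivative of Ψ
  have hΨd : ∀ a, 0 ≤ a → HasDerivWithinAt Ψ (μ a * Ψ a - β a / r) (Ici 0) a := by
    intro a ha
    have hEd : HasDerivWithinAt (fun u => Real.exp (A u)) (Real.exp (A a) * μ a) (Ici 0) a :=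
      (hA a ha).exp
    have h1 : HasDerivWithinAt (fun u => (1 / r) * (Real.exp (A u) * G u))
        ((1 / r) * ((Real.exp (A a) * μ a) * G a + Real.exp (A a) * (-g a))) (Ici 0) a :=
      (hEd.mul (hGd a ha)).const_mul (1 / r)
    have h2 : (1 / r) * ((Real.exp (A a) * μ a) * G a + Real.exp (A a) * (-g a)) =
        μ a * Ψ a - β a / r := by
      rw [hΨrep a ha]
      simp only [hgdef]
      have hcancel : Real.exp (A a) * Real.exp (-A a) = 1 := by
        rw [← Real.exp_add]; simp
      linear_combination (-(β a) / r) * hcancel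
    rw [h2] at h1
    exact h1.congr (fun x hx => hΨrep x hx) (hΨrep a ha)
  have hΨc : ContinuousOn Ψ (Ici 0) := fun a ha => (hΨd a ha).continuousWithinAt
  have hΨ0 : Ψ 0 = 1 := by
    rw [hΨ 0, ← hr]
    field_simp
  -- FTC-2 for μΨ on finite intervals
  have hΨFTC : ∀ u v : ℝ, 0 ≤ u → u ≤ v →
      (∫ s in u..v, μ s * Ψ s) = (Ψ v - Ψ u) + (1 / r) * ∫ s in u..v, β s := by
    intro u v hu huv
    have hv : 0 ≤ v := le_trans hu huv
    have hIcc : Icc u v ⊆ Ici (0:ℝ) := fun x hx => le_trans hu hx.1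
    have hμΨc : ContinuousOn (fun s => μ s * Ψ s) (Ici 0) := hμc.mul hΨc
    have h1 : (∫ s in u..v, (μ s * Ψ s - β s / r)) = Ψ v - Ψ u := by
      apply intervalIntegral.integral_eq_sub_of_hasDeriv_right_of_le huv (hΨc.mono hIcc)
      · intro x hx
        have hx0 : 0 < x := lt_of_le_of_lt hu hx.1
        exact ((hΨd x hx0.le).hasDerivAt (Ici_mem_nhds hx0)).hasDerivWithinAt
      · exact hII _ ((hμΨc).sub (hβc.div_const r)) u v hu hv
    have h2 : (∫ s in u..v, (μ s * Ψ s - β s / r)) =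
        (∫ s in u..v, μ s * Ψ s) - ∫ s in u..v, β s / r := by
      apply intervalIntegral.integral_sub (hII _ hμΨc u v hu hv)
        (hII _ (hβc.div_const r) u v hu hv)
    rw [h2] at h1
    have h3 : (∫ s in u..v, β s / r) = (1 / r) * ∫ s in u..v, β s := by
      rw [intervalIntegral.integral_div]; ring
    rw [h3] at h1
    linarith
  have hbox : ∀ u v : ℝ, 0 ≤ u → u ≤ v → v ≤ u + 1 →
      (∫ s in u..v, μ s * Ψ s) ≤ B + M / r := by
    intro u v hu huv hv1
    have hv : 0 ≤ v := le_trans hu huv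
    rw [hΨFTC u v hu huv]
    have h1 : Ψ v - Ψ u ≤ B := by
      have := hΨub v hv
      have := hΨnn u hu
      linarith
    have h2 : (∫ s in u..v, β s) ≤ M * (v - u) := by
      have := intervalIntegral.integral_mono_on huv (hII β hβc u v hu hv)
        intervalIntegrable_const (fun x hx => hβM x (le_trans hu hx.1))
      rw [intervalIntegral.integral_const, smul_eq_mul] at this
      linarith [this]
    have h3 : (1 / r) * (∫ s in u..v, β s) ≤ M / r := by
      have h1r : (0:ℝ) < 1 / r := by positivity
      calc (1 / r) * (∫ s in u..v, β s) ≤ (1 / r) * (M * (v - u)) :=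
            mul_le_mul_of_nonneg_left h2 h1r.le
        _ ≤ (1 / r) * (M * 1) := by
            apply mul_le_mul_of_nonneg_left _ h1r.le
            apply mul_le_mul_of_nonneg_left _ hM0
            linarith
        _ = M / r := by field_simp
    linarith
  -- continuity of y, h := |y| + |y'|
  have hyc : ContinuousOn y (Ici 0) := fun a ha => (hy a ha).continuousWithinAt
  set h : ℝ → ℝ := fun s => |y s| + |y' s| with hhdef
  have hhc : ContinuousOn h (Ici 0) := hyc.abs.add hy'c.abs
  have hhnn : ∀ s, 0 ≤ h s := fun s => by positivity
  have hhint : IntegrableOn h (Ici 0) := hyint.abs.add hy'int.abs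
  -- FTC for y
  have hFTCy : ∀ a s : ℝ, 0 ≤ a → a ≤ s → (∫ t in a..s, y' t) = y s - y a := by
    intro a s ha has
    apply intervalIntegral.integral_eq_sub_of_hasDeriv_right_of_le has
      (hyc.mono (fun x hx => le_trans ha hx.1))
    · intro x hx
      have hx0 : 0 < x := lt_of_le_of_lt ha hx.1
      exact ((hy x hx0.le).hasDerivAt (Ici_mem_nhds hx0)).hasDerivWithinAt
    · exact hII y' hy'c a s ha (le_trans ha has)
  -- window bound
  have hwin : ∀ a, 0 ≤ a → |y a| ≤ ∫ s in a..(a + 1), h s := by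
    intro a ha
    have hyII : IntervalIntegrable (fun s => |y s|) volume a (a + 1) :=
      hII _ hyc.abs a (a + 1) ha (by linarith)
    have hy'II : IntervalIntegrable (fun s => |y' s|) volume a (a + 1) :=
      hII _ hy'c.abs a (a + 1) ha (by linarith)
    have hK : ∀ s ∈ Icc a (a + 1), |y a| ≤ |y s| + ∫ t in a..(a + 1), |y' t| := by
      intro s hs
      have h1 : y a = y s - ∫ t in a..s, y' t := by
        have := hFTCy a s ha hs.1; linarith
      have h2 : |y a| ≤ |y s| + |∫ t in a..s, y' t| := by
        rw [h1]
        calc |y s - ∫ t in a..s, y' t| ≤ |y s| + |∫ t in a..s, y' t| := abs_sub _ _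
          _ = _ := rfl
      have h3 : |∫ t in a..s, y' t| ≤ ∫ t in a..s, |y' t| :=
        intervalIntegral.abs_integral_le_integral_abs hs.1
      have h4 : (∫ t in a..s, |y' t|) ≤ ∫ t in a..(a + 1), |y' t| := by
        apply intervalIntegral.integral_mono_interval le_rfl hs.1 hs.2
        · exact ae_of_all _ fun t => abs_nonneg _
        · exact hy'II
      linarith
    have h5 : (∫ s in a..(a + 1), |y a|) ≤
        ∫ s in a..(a + 1), (|y s| + ∫ t in a..(a + 1), |y' t|) := by
      apply intervalIntegral.integral_mono_on (by linarith) intervalIntegrable_const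
        (hyII.add intervalIntegrable_const) hK
    rw [intervalIntegral.integral_const] at h5
    rw [intervalIntegral.integral_add hyII intervalIntegrable_const,
      intervalIntegral.integral_const] at h5
    have h6 : (∫ s in a..(a + 1), h s) =
        (∫ s in a..(a + 1), |y s|) + ∫ s in a..(a + 1), |y' s| := by
      simp only [hhdef]
      exact intervalIntegral.integral_add hyII hy'II
    have h7 : ((a + 1) - a) = (1:ℝ) := by ring
    rw [h7] at h5
    simp only [one_smul, smul_eq_mul, one_mul] at h5
    linarith
  -- decompositions of the half line
  have hIciUnion : Ici (0:ℝ) = ⋃ n : ℕ, Ico (n:ℝ) ((n:ℝ) + 1) := by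
    ext x
    simp only [mem_Ici, mem_iUnion, mem_Ico]
    constructor
    · intro hx
      exact ⟨⌊x⌋₊, Nat.floor_le hx, Nat.lt_floor_add_one x⟩
    · rintro ⟨n, h1, _⟩
      exact le_trans (Nat.cast_nonneg n) h1
  have hIoiUnion : Ioi (0:ℝ) = ⋃ n : ℕ, Ioc (n:ℝ) ((n:ℝ) + 1) := by
    ext x
    simp only [mem_Ioi, mem_iUnion, mem_Ioc]
    constructor
    · intro hx
      have h1 : 1 ≤ ⌈x⌉₊ := Nat.one_le_ceil_iff.2 hx
      refine ⟨⌈x⌉₊ - 1, ?_, ?_⟩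
      · have h2 : ((⌈x⌉₊:ℝ)) < x + 1 := Nat.ceil_lt_add_one hx.le
        have h3 : ((⌈x⌉₊ - 1 : ℕ):ℝ) = (⌈x⌉₊:ℝ) - 1 := by
          rw [Nat.cast_sub h1]; norm_num
        rw [h3]; linarith
      · have h3 : ((⌈x⌉₊ - 1 : ℕ):ℝ) = (⌈x⌉₊:ℝ) - 1 := by
          rw [Nat.cast_sub h1]; norm_num
        rw [h3]
        have := Nat.le_ceil x
        linarith
    · rintro ⟨n, h1, _⟩
      exact lt_of_le_of_lt (Nat.cast_nonneg n) h1
  have hcast : ∀ m n : ℕ, m < n → (m:ℝ) + 1 ≤ (n:ℝ) := by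
    intro m n hmn
    exact_mod_cast Nat.succ_le_of_lt hmn
  have hpairIco : Pairwise (Function.onFun Disjoint fun n : ℕ => Ico (n:ℝ) ((n:ℝ) + 1)) := by
    intro m n hmn
    simp only [Function.onFun]
    rw [Set.Ico_disjoint_Ico]
    rcases hmn.lt_or_gt with hl | hl
    · calc min ((m:ℝ) + 1) ((n:ℝ) + 1) ≤ (m:ℝ) + 1 := min_le_left _ _
        _ ≤ (n:ℝ) := hcast m n hl
        _ ≤ max (m:ℝ) (n:ℝ) := le_max_right _ _
    · calc min ((m:ℝ) + 1) ((n:ℝ) + 1) ≤ (n:ℝ) + 1 := min_le_right _ _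
        _ ≤ (m:ℝ) := hcast n m hl
        _ ≤ max (m:ℝ) (n:ℝ) := le_max_left _ _
  have hpairIoc : Pairwise (Function.onFun Disjoint fun n : ℕ => Ioc (n:ℝ) ((n:ℝ) + 1)) := by
    intro m n hmn
    simp only [Function.onFun]
    rw [Set.Ioc_disjoint_Ioc]
    rcases hmn.lt_or_gt with hl | hl
    · calc min ((m:ℝ) + 1) ((n:ℝ) + 1) ≤ (m:ℝ) + 1 := min_le_left _ _
        _ ≤ (n:ℝ) := hcast m n hl
        _ ≤ max (m:ℝ) (n:ℝ) := le_max_right _ _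
    · calc min ((m:ℝ) + 1) ((n:ℝ) + 1) ≤ (n:ℝ) + 1 := min_le_right _ _
        _ ≤ (m:ℝ) := hcast n m hl
        _ ≤ max (m:ℝ) (n:ℝ) := le_max_left _ _
  set CB : ℝ := B + M / r with hCBdef
  have hμΨc : ContinuousOn (fun s => μ s * Ψ s) (Ici 0) := hμc.mul hΨc
  have hsq : ∀ n : ℕ, (∫⁻ a in Ico (n:ℝ) ((n:ℝ) + 1), ENNReal.ofReal (μ a * Ψ a)) ≤
      ENNReal.ofReal CB := by
    intro n
    have hn0 : (0:ℝ) ≤ n := Nat.cast_nonneg n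
    have hsub : Icc (n:ℝ) ((n:ℝ) + 1) ⊆ Ici (0:ℝ) := fun x hx => le_trans hn0 hx.1
    have hint : IntegrableOn (fun a => μ a * Ψ a) (Ico (n:ℝ) ((n:ℝ) + 1)) :=
      ((hμΨc.mono hsub).integrableOn_Icc).mono_set Ico_subset_Icc_self
    have hnn : 0 ≤ᵐ[volume.restrict (Ico (n:ℝ) ((n:ℝ) + 1))] fun a => μ a * Ψ a := by
      refine (ae_restrict_iff' measurableSet_Ico).2 (ae_of_all _ fun a ha => ?_)
      have ha0 : 0 ≤ a := le_trans hn0 ha.1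
      exact mul_nonneg (le_trans hμ0.le (hμb a ha0)) (hΨnn a ha0)
    rw [← ofReal_integral_eq_lintegral_ofReal hint hnn]
    apply ENNReal.ofReal_le_ofReal
    have heq : (∫ a in Ico (n:ℝ) ((n:ℝ) + 1), μ a * Ψ a) =
        ∫ a in (n:ℝ)..((n:ℝ) + 1), μ a * Ψ a := by
      rw [intervalIntegral.integral_of_le (by linarith), setIntegral_congr_set Ico_ae_eq_Ioc]
    rw [heq, hCBdef]
    exact hbox (n:ℝ) ((n:ℝ) + 1) hn0 (by linarith) (by linarith)
  set c : ℕ → ℝ := fun n => ∫ s in (n:ℝ)..((n:ℝ) + 2), h s with hcdef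
  -- the key integrability
  have hμΨy_int : IntegrableOn (fun a => μ a * Ψ a * y a) (Ici 0) := by
    refine ⟨(hμΨc.aestronglyMeasurable measurableSet_Ici).mul hyint.aestronglyMeasurable, ?_⟩
    rw [hasFiniteIntegral_iff_norm]
    rw [hIciUnion, lintegral_iUnion (fun n => measurableSet_Ico) hpairIco]
    have hterm : ∀ n : ℕ, (∫⁻ a in Ico (n:ℝ) ((n:ℝ) + 1), ENNReal.ofReal ‖μ a * Ψ a * y a‖) ≤
        ENNReal.ofReal CB * ENNReal.ofReal (c n) := by
      intro n
      have hn0 : (0:ℝ) ≤ n := Nat.cast_nonneg n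
      have hstep : ∀ a ∈ Ico (n:ℝ) ((n:ℝ) + 1), ENNReal.ofReal ‖μ a * Ψ a * y a‖ ≤
          ENNReal.ofReal (μ a * Ψ a) * ENNReal.ofReal (c n) := by
        intro a ha
        have ha0 : 0 ≤ a := le_trans hn0 ha.1
        have hμΨnn : 0 ≤ μ a * Ψ a :=
          mul_nonneg (le_trans hμ0.le (hμb a ha0)) (hΨnn a ha0)
        have hya : |y a| ≤ c n := by
          calc |y a| ≤ ∫ s in a..(a + 1), h s := hwin a ha0
            _ ≤ c n := by
              apply intervalIntegral.integral_mono_interval ha.1 (by linarith)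
                (by linarith [ha.2])
              · exact ae_of_all _ fun t => hhnn t
              · exact hII h hhc (n:ℝ) ((n:ℝ) + 2) hn0 (by linarith)
        calc ENNReal.ofReal ‖μ a * Ψ a * y a‖
            = ENNReal.ofReal ((μ a * Ψ a) * |y a|) := by
              rw [norm_eq_abs, abs_mul, abs_of_nonneg hμΨnn]
          _ = ENNReal.ofReal (μ a * Ψ a) * ENNReal.ofReal |y a| :=
              ENNReal.ofReal_mul hμΨnn
          _ ≤ _ := mul_le_mul_right (ENNReal.ofReal_le_ofReal hya) _
      calc (∫⁻ a in Ico (n:ℝ) ((n:ℝ) + 1), ENNReal.ofReal ‖μ a * Ψ a * y a‖)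
          ≤ ∫⁻ a in Ico (n:ℝ) ((n:ℝ) + 1),
              ENNReal.ofReal (μ a * Ψ a) * ENNReal.ofReal (c n) :=
            lintegral_mono_ae ((ae_restrict_iff' measurableSet_Ico).2 (ae_of_all _ hstep))
        _ = (∫⁻ a in Ico (n:ℝ) ((n:ℝ) + 1), ENNReal.ofReal (μ a * Ψ a)) *
              ENNReal.ofReal (c n) := by
            apply lintegral_mul_const''
            have hsub : Ico (n:ℝ) ((n:ℝ) + 1) ⊆ Ici (0:ℝ) := fun x hx => le_trans hn0 hx.1
            exact (ENNReal.measurable_ofReal.comp_aemeasurable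
              ((hμΨc.mono hsub).aemeasurable measurableSet_Ico))
        _ ≤ ENNReal.ofReal CB * ENNReal.ofReal (c n) :=
            mul_le_mul_left (hsq n) _
    set J : ℕ → ENNReal := fun n => ∫⁻ s in Ioc (n:ℝ) ((n:ℝ) + 1), ENNReal.ofReal (h s)
      with hJdef
    have hhfin : (∫⁻ s in Ici (0:ℝ), ENNReal.ofReal (h s)) < ⊤ := by
      have h1 := hhint.2
      rw [hasFiniteIntegral_iff_norm] at h1
      have h2 : (∫⁻ s in Ici (0:ℝ), ENNReal.ofReal (h s)) =
          ∫⁻ s in Ici (0:ℝ), ENNReal.ofReal ‖h s‖ := by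
        apply lintegral_congr
        intro s
        rw [norm_eq_abs, abs_of_nonneg (hhnn s)]
      rw [h2]
      exact h1
    have hJsum : (∑' n, J n) ≤ ∫⁻ s in Ici (0:ℝ), ENNReal.ofReal (h s) := by
      rw [hJdef, ← lintegral_iUnion (fun n => measurableSet_Ioc) hpairIoc, ← hIoiUnion]
      exact lintegral_mono' (Measure.restrict_mono Ioi_subset_Ici_self le_rfl) le_rfl
    have hcJ : ∀ n : ℕ, ENNReal.ofReal (c n) = J n + J (n + 1) := by
      intro n
      have hn0 : (0:ℝ) ≤ n := Nat.cast_nonneg n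
      have hsub : Icc (n:ℝ) ((n:ℝ) + 2) ⊆ Ici (0:ℝ) := fun x hx => le_trans hn0 hx.1
      have h1 : c n = ∫ s in Ioc (n:ℝ) ((n:ℝ) + 2), h s := by
        rw [hcdef]
        exact intervalIntegral.integral_of_le (by linarith)
      have hint2 : IntegrableOn h (Ioc (n:ℝ) ((n:ℝ) + 2)) :=
        ((hhc.mono hsub).integrableOn_Icc).mono_set Ioc_subset_Icc_self
      have hnn2 : 0 ≤ᵐ[volume.restrict (Ioc (n:ℝ) ((n:ℝ) + 2))] h :=
        ae_of_all _ fun s => hhnn s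
      rw [h1, ofReal_integral_eq_lintegral_ofReal hint2 hnn2]
      have hsplit2 : Ioc (n:ℝ) ((n:ℝ) + 2) =
          Ioc (n:ℝ) ((n:ℝ) + 1) ∪ Ioc ((n:ℝ) + 1) ((n:ℝ) + 2) :=
        (Ioc_union_Ioc_eq_Ioc (by linarith) (by linarith)).symm
      have hdisj2 : Disjoint (Ioc (n:ℝ) ((n:ℝ) + 1)) (Ioc ((n:ℝ) + 1) ((n:ℝ) + 2)) := by
        rw [Set.Ioc_disjoint_Ioc]
        calc min ((n:ℝ) + 1) ((n:ℝ) + 2) ≤ (n:ℝ) + 1 := min_le_left _ _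
          _ ≤ max (n:ℝ) ((n:ℝ) + 1) := le_max_right _ _
      rw [hsplit2, lintegral_union measurableSet_Ioc hdisj2]
      congr 1
      have e1 : ((n + 1 : ℕ):ℝ) = (n:ℝ) + 1 := by push_cast; ring
      have e2 : ((n + 1 : ℕ):ℝ) + 1 = (n:ℝ) + 2 := by push_cast; ring
      rw [hJdef]
      simp only
      rw [e2, e1]
    have hshift : (∑' n, J (n + 1)) ≤ ∑' n, J n :=
      ENNReal.summable.tsum_le_tsum_of_inj (fun n => n + 1) (add_left_injective 1)
        (fun k _ => by positivity) (fun n => le_rfl) ENNReal.summable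
    have hcsum : (∑' n, ENNReal.ofReal (c n)) < ⊤ := by
      calc (∑' n, ENNReal.ofReal (c n)) = ∑' n, (J n + J (n + 1)) := by
            apply tsum_congr; intro n; exact hcJ n
        _ = (∑' n, J n) + ∑' n, J (n + 1) := ENNReal.tsum_add
        _ ≤ (∑' n, J n) + ∑' n, J n := add_le_add le_rfl hshift
        _ < ⊤ := ENNReal.add_lt_top.2 ⟨lt_of_le_of_lt hJsum hhfin,
            lt_of_le_of_lt hJsum hhfin⟩
    calc (∑' n : ℕ, ∫⁻ a in Ico (n:ℝ) ((n:ℝ) + 1), ENNReal.ofReal ‖μ a * Ψ a * y a‖)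
        ≤ ∑' n, ENNReal.ofReal CB * ENNReal.ofReal (c n) := ENNReal.tsum_le_tsum hterm
      _ = ENNReal.ofReal CB * ∑' n, ENNReal.ofReal (c n) := ENNReal.tsum_mul_left
      _ < ⊤ := ENNReal.mul_lt_top ENNReal.ofReal_lt_top hcsum
  -- integrability of the remaining pieces
  have hβy_int : IntegrableOn (fun a => β a * y a) (Ici 0) := by
    refine (hyint.norm.const_mul M).mono'
      ((hβc.aestronglyMeasurable measurableSet_Ici).mul hyint.aestronglyMeasurable) ?_
    refine (ae_restrict_iff' measurableSet_Ici).2 (ae_of_all _ fun a ha => ?_)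
    simp only [norm_eq_abs, abs_mul]
    rw [abs_of_nonneg (hβnn a ha)]
    exact mul_le_mul_of_nonneg_right (hβM a ha) (abs_nonneg _)
  have hΨy'_int : IntegrableOn (fun a => Ψ a * y' a) (Ici 0) := by
    refine (hy'int.norm.const_mul B).mono'
      ((hΨc.aestronglyMeasurable measurableSet_Ici).mul hy'int.aestronglyMeasurable) ?_
    refine (ae_restrict_iff' measurableSet_Ici).2 (ae_of_all _ fun a ha => ?_)
    simp only [norm_eq_abs, abs_mul]
    rw [abs_of_nonneg (hΨnn a ha)]
    exact mul_le_mul_of_nonneg_right (hΨub a ha) (abs_nonneg _)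
  set f' : ℝ → ℝ := fun a => (μ a * Ψ a - β a / r) * y a + Ψ a * y' a with hf'def
  have hf'int : IntegrableOn f' (Ici 0) := by
    have h1 : IntegrableOn
        (fun a => μ a * Ψ a * y a - (β a * y a) / r + Ψ a * y' a) (Ici 0) :=
      (hμΨy_int.sub (hβy_int.div_const r)).add hΨy'_int
    refine h1.congr_fun (fun a _ => ?_) measurableSet_Ici
    simp only [hf'def]
    ring
  -- the limit of `y` at infinity is zero
  have hylim : Filter.Tendsto y Filter.atTop (nhds 0) := by
    set L : ℝ := y 0 + ∫ t in Ioi (0:ℝ), y' t with hLdef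
    have h1 : Filter.Tendsto (fun a => y 0 + ∫ t in (0:ℝ)..a, y' t)
        Filter.atTop (nhds L) :=
      tendsto_const_nhds.add (intervalIntegral_tendsto_integral_Ioi 0
        (hy'int.mono_set Ioi_subset_Ici_self) Filter.tendsto_id)
    have h2 : Filter.Tendsto y Filter.atTop (nhds L) := by
      apply h1.congr'
      filter_upwards [Filter.eventually_ge_atTop (0:ℝ)] with a ha
      have := hFTCy 0 a le_rfl ha
      linarith
    have h3 : L = 0 := limit_eq_zero_of_integrableOn h2 hyint
    rwa [h3] at h2
  have hΨylim : Filter.Tendsto (fun a => Ψ a * y a) Filter.atTop (nhds 0) := by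
    apply squeeze_zero_norm' (a := fun a => B * |y a|)
    · filter_upwards [Filter.eventually_ge_atTop (0:ℝ)] with a ha
      rw [norm_eq_abs, abs_mul, abs_of_nonneg (hΨnn a ha)]
      exact mul_le_mul_of_nonneg_right (hΨub a ha) (abs_nonneg _)
    · have := (hylim.abs).const_mul B
      simpa using this
  -- improper fundamental theorem of calculus
  have hderiv : ∀ x ∈ Ioi (0:ℝ), HasDerivAt (fun a => Ψ a * y a) (f' x) x := by
    intro x hx
    have hx0 : (0:ℝ) < x := hx
    exact ((hΨd x hx0.le).mul (hy x hx0.le)).hasDerivAt (Ici_mem_nhds hx0)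
  have hmain := integral_Ioi_of_hasDerivAt_of_tendsto (f := fun a => Ψ a * y a)
    (f' := f') (a := 0) (m := 0)
    (((hΨd 0 le_rfl).mul (hy 0 le_rfl)).continuousWithinAt) hderiv
    (hf'int.mono_set Ioi_subset_Ici_self) hΨylim
  simp only [hΨ0, one_mul, zero_sub] at hmain
  -- final computation
  have hsplit : EqOn (fun a => Ψ a * (y' a + μ a * y a))
      (fun a => f' a + (β a * y a) / r) (Ici 0) := by
    intro a _
    simp only [hf'def]
    ring
  rw [setIntegral_congr_fun measurableSet_Ici hsplit]
  rw [integral_add hf'int (hβy_int.div_const r)]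
  have h4 : (∫ a in Ici (0:ℝ), f' a) = -(y 0) := by
    rw [integral_Ici_eq_integral_Ioi]; exact hmain
  have h5 : (∫ a in Ici (0:ℝ), (β a * y a) / r) =
      (1 / r) * ∫ a in Ici (0:ℝ), β a * y a := by
    rw [integral_div]; ring
  rw [h4, h5]
  ring
end

section
/- Assume the two-strain SI model hypotheses with β_x, β_y additionally continuous. Let S : [0,∞) → (0,∞) be continuously differentiable and x, y : [0,∞)×[0,∞) → [0,∞) be continuously differentiable and satisfy, for all t ≥ 0 and a ≥ 0: ∂_t x(t,a) + ∂_a x(t,a) = −μ_x(a)x(t,a), ∂_t y(t,a) + ∂_a y(t,a) = −μ_y(a)y(t,a), x(t,0) = S(t)·∫_0^∞ β_x(a)x(t,a) da, y(t,0) = S(t)·∫_0^∞ β_y(a)y(t,a) da, and S'(t) = Λ − μ_S S(t) − S(t)·∫_0^∞ β_x(a)x(t,a) da − S(t)·∫_0^∞ β_y(a)y(t,a) da. Assume further that for each t the functions a ↦ x(t,a), ∂_a x(t,a), y(t,a), ∂_a y(t,a) are integrable on [0,∞), and that d/dt ∫_0^∞ Ψ_x(a)x(t,a) da = ∫_0^∞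 Ψ_x(a)∂_t x(t,a) da and d/dt ∫_0^∞ Ψ_y(a)y(t,a) da = ∫_0^∞ Ψ_y(a)∂_t y(t,a) da. Define L_0(t) = S_0*·g(S(t)/S_0*) + ∫_0^∞ Ψ_x(a)x(t,a) da + ∫_0^∞ Ψ_y(a)y(t,a) da, where S_0* = Λ/μ_S. Then for every t ≥ 0: L_0'(t) = −(Λ − μ_S S(t))²/(μ_S S(t)) + ((R_0^x − 1)/r_x)·∫_0^∞ β_x(a)x(t,a) da + ((R_0^y − 1)/r_y)·∫_0^∞ β_y(a)y(t,a) da. In particular, if max{R_0^x, R_0^y} ≤ 1, then L_0'(t) ≤ 0 for all t ≥ 0. -/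
open MeasureTheory Real Set Filter
open Topology

/-- The Volterra-type function `g(u) = u - ln u - 1`. -/
noncomputable def g (u : ℝ) : ℝ := u - Real.log u - 1

/-- A function bounded below in norm by a positive constant on `[T₀,∞)` is not integrable there. -/
lemma helper_not_int (f : ℝ → ℝ) (c T₀ : ℝ) (hc : 0 < c)
    (hfi : IntegrableOn f (Ici T₀)) (hb : ∀ a, T₀ ≤ a → c ≤ ‖f a‖) : False := by
  have h1 : IntegrableOn (fun _ => c) (Ici T₀) := by
    refine Integrable.mono' hfi.norm aestronglyMeasurable_const ?_
    filter_upwards [ae_restrict_mem measurableSet_Ici] with a ha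
    rw [Real.norm_eq_abs, abs_of_pos hc]
    exact hb a ha
  rw [integrableOn_const_iff] at h1
  rcases h1 with h | h
  · exact hc.ne' (enorm_eq_zero.mp h)
  · rw [Real.volume_Ici] at h; exact (lt_irrefl _ h).elim

/-- If `f` is integrable on `[0,∞)` and tends to `l` at infinity then `l = 0`. -/
lemma helper_tendsto_zero (f : ℝ → ℝ) (l : ℝ) (hfi : IntegrableOn f (Ici 0))
    (hl : Tendsto f atTop (𝓝 l)) : l = 0 := by
  by_contra hne
  have hpos : 0 < |l| / 2 := by positivity
  have hev : ∀ᶠ a in atTop, dist (f a) l < |l| / 2 := hl (Metric.ball_mem_nhds l hpos)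
  have hev2 : ∀ᶠ a in atTop, |l| / 2 ≤ ‖f a‖ ∧ 0 ≤ a := by
    filter_upwards [hev, eventually_ge_atTop (0:ℝ)] with a ha ha0
    refine ⟨?_, ha0⟩
    have : |l| - |f a - l| ≤ |f a| := by
      have := abs_sub_abs_le_abs_sub l (f a)
      have h2 : |l - f a| = |f a - l| := abs_sub_comm l (f a)
      linarith [abs_sub_abs_le_abs_sub l (f a), h2 ▸ (abs_sub_abs_le_abs_sub l (f a))]
    rw [Real.dist_eq] at ha
    rw [Real.norm_eq_abs]
    linarith
  obtain ⟨T₀, hT₀⟩ := eventually_atTop.mp hev2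
  exact helper_not_int f (|l| / 2) T₀ hpos
    (hfi.mono_set (Ici_subset_Ici.mpr (hT₀ T₀ le_rfl).2)) (fun a ha => (hT₀ a ha).1)

/-- An integrable function on `[0,∞)` cannot tend to infinity. -/
lemma helper_not_tendsto_atTop (f : ℝ → ℝ) (hfi : IntegrableOn f (Ici 0))
    (hl : Tendsto f atTop atTop) : False := by
  have hev : ∀ᶠ a in atTop, (1:ℝ) ≤ f a ∧ 0 ≤ a :=
    (hl.eventually_ge_atTop 1).and (eventually_ge_atTop (0:ℝ))
  obtain ⟨T₀, hT₀⟩ := eventually_atTop.mp hev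
  refine helper_not_int f 1 T₀ one_pos
    (hfi.mono_set (Ici_subset_Ici.mpr (hT₀ T₀ le_rfl).2)) (fun a ha => ?_)
  rw [Real.norm_eq_abs]
  exact le_trans (hT₀ a ha).1 (le_abs_self _)

/-- Product of a function continuous (hence bounded) on a compact set with an
integrable function is integrable. -/
lemma helper_cont_mul_int (φ f : ℝ → ℝ) (T : ℝ) (hφ : Continuous φ)
    (hf : IntegrableOn f (Icc 0 T)) :
    IntegrableOn (fun a => φ a * f a) (Icc (0:ℝ) T) := by
  obtain ⟨C, hC⟩ := (isCompact_Icc (a := (0:ℝ)) (b := T)).exists_bound_of_continuousOn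
    hφ.continuousOn
  refine Integrable.mono' (hf.norm.const_mul C) (hφ.aestronglyMeasurable.mul hf.1) ?_
  filter_upwards [ae_restrict_mem measurableSet_Icc] with a ha
  rw [norm_mul]
  exact mul_le_mul_of_nonneg_right (hC a ha) (norm_nonneg _)

/-- Bounded measurable times integrable is integrable. -/
lemma helper_bdd_mul_int (φ f : ℝ → ℝ) (K : ℝ) {s : Set ℝ} (hs : MeasurableSet s)
    (hφm : AEStronglyMeasurable φ (volume.restrict s)) (hφb : ∀ a ∈ s, ‖φ a‖ ≤ K)
    (hf : IntegrableOn f s) : IntegrableOn (fun a => φ a * f a) s := by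
  refine Integrable.mono' (hf.norm.const_mul K) (hφm.mul hf.1) ?_
  filter_upwards [ae_restrict_mem hs] with a ha
  rw [norm_mul]
  exact mul_le_mul_of_nonneg_right (hφb a ha) (norm_nonneg _)

lemma helper_ii (f : ℝ → ℝ) (hf : ∀ T, IntegrableOn f (Icc 0 T))
    (T₁ T₂ : ℝ) (h1 : 0 ≤ T₁) (h2 : 0 ≤ T₂) : IntervalIntegrable f volume T₁ T₂ := by
  apply IntegrableOn.intervalIntegrable
  refine (hf (max T₁ T₂)).mono_set ?_
  rw [uIcc_eq_union]
  rintro z (hz | hz)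
  · exact ⟨le_trans h1 hz.1, le_trans hz.2 (le_max_right _ _)⟩
  · exact ⟨le_trans h2 hz.1, le_trans hz.2 (le_max_left _ _)⟩

/-- Key improper integration lemma. -/
lemma helper_deriv_integral (h h' G : ℝ → ℝ)
    (hd : ∀ a, 0 ≤ a → HasDerivWithinAt h (h' a) (Ici 0) a)
    (hint : IntegrableOn h (Ici 0))
    (hGint : IntegrableOn G (Ici 0))
    (hGnn : ∀ a, 0 ≤ a → 0 ≤ G a)
    (hlb : ∀ a, 0 ≤ a → -G a ≤ h' a)
    (h'loc : ∀ T, IntegrableOn h' (Icc 0 T)) :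
    IntegrableOn h' (Ici 0) ∧ (∫ a in Ici (0:ℝ), h' a) = -(h 0) := by
  have hFTC : ∀ T, 0 ≤ T → (∫ a in (0:ℝ)..T, h' a) = h T - h 0 := by
    intro T hT
    refine intervalIntegral.integral_eq_sub_of_hasDeriv_right_of_le hT ?_ ?_ ?_
    · intro a ha
      exact ((hd a ha.1).continuousWithinAt).mono Icc_subset_Ici_self
    · intro a ha
      exact (hd a ha.1.le).mono (fun z hz => le_trans ha.1.le (le_of_lt hz))
    · rw [intervalIntegrable_iff_integrableOn_Icc_of_le hT]
      exact h'loc T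
  set φ : ℝ → ℝ := fun a => h' a + G a with hφdef
  have hGloc : ∀ T : ℝ, IntegrableOn G (Icc 0 T) :=
    fun T => hGint.mono_set (fun z hz => hz.1)
  have hφloc : ∀ T : ℝ, IntegrableOn φ (Icc 0 T) := fun T => (h'loc T).add (hGloc T)
  have hφnn : ∀ a, 0 ≤ a → 0 ≤ φ a := by
    intro a ha
    have := hlb a ha
    simp only [hφdef]
    linarith
  set A : ℝ → ℝ := fun T => ∫ a in (0:ℝ)..(max T 0), φ a with hA
  have monoA : Monotone A := by
    intro T₁ T₂ hle
    have h1 : (0:ℝ) ≤ max T₁ 0 := le_max_right _ _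
    have h2' : max T₁ 0 ≤ max T₂ 0 := max_le_max hle le_rfl
    have key : A T₂ - A T₁ = ∫ a in (max T₁ 0)..(max T₂ 0), φ a :=
      intervalIntegral.integral_interval_sub_left
        (helper_ii φ hφloc 0 _ le_rfl (le_max_right _ _))
        (helper_ii φ hφloc 0 _ le_rfl h1)
    have hnn2 : 0 ≤ ∫ a in (max T₁ 0)..(max T₂ 0), φ a :=
      intervalIntegral.integral_nonneg h2' (fun u hu => hφnn u (le_trans h1 hu.1))
    linarith
  have hAeq : ∀ T, 0 ≤ T → A T = h T - h 0 + ∫ a in (0:ℝ)..T, G a := by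
    intro T hT
    have hmax : max T 0 = T := max_eq_left hT
    simp only [hA, hmax, hφdef]
    rw [intervalIntegral.integral_add (helper_ii h' h'loc 0 T le_rfl hT)
      (helper_ii G hGloc 0 T le_rfl hT), hFTC T hT]
  rcases tendsto_of_monotone monoA with hTop | ⟨l, hl⟩
  · exfalso
    have hGb : ∀ T, 0 ≤ T → (∫ a in (0:ℝ)..T, G a) ≤ ∫ a in Ici (0:ℝ), G a := by
      intro T hT
      rw [intervalIntegral.integral_of_le hT]
      refine setIntegral_mono_set hGint ?_ ?_
      · filter_upwards [ae_restrict_mem measurableSet_Ici] with a ha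
        exact hGnn a ha
      · exact HasSubset.Subset.eventuallyLE (fun z hz => hz.1.le)
    have hTend : Tendsto h atTop atTop := by
      refine tendsto_atTop_mono' atTop ?_
        (tendsto_atTop_add_const_right atTop ((h 0 - ∫ a in Ici (0:ℝ), G a)) hTop)
      filter_upwards [eventually_ge_atTop (0:ℝ)] with T hT
      have e1 := hAeq T hT
      have e2 := hGb T hT
      show A T + (h 0 - ∫ a in Ici (0:ℝ), G a) ≤ h T
      linarith
    exact helper_not_tendsto_atTop h hint hTend
  · have hble : ∀ T, A T ≤ l := fun T => monoA.ge_of_tendsto hl T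
    have hφint : IntegrableOn φ (Ioi 0) := by
      refine integrableOn_Ioi_of_intervalIntegral_norm_bounded l 0
        (b := fun i : ℝ => i) (fun i => ?_) tendsto_id ?_
      · exact (hφloc (max 0 i)).mono_set
          (fun z hz => ⟨hz.1.le, le_trans hz.2 (le_max_right _ _)⟩)
      · filter_upwards [eventually_ge_atTop (0:ℝ)] with i hi
        have hcongr : (∫ a in (0:ℝ)..i, ‖φ a‖) = ∫ a in (0:ℝ)..i, φ a := by
          apply intervalIntegral.integral_congr
          intro z hz
          rw [uIcc_of_le hi] at hz
          exact Real.norm_of_nonneg (hφnn z hz.1)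
        rw [hcongr]
        have h3 := hble i
        have h4 : A i = ∫ a in (0:ℝ)..i, φ a := by
          simp only [hA, max_eq_left hi]
        linarith
    have hG_Ioi : IntegrableOn G (Ioi 0) := hGint.mono_set Ioi_subset_Ici_self
    have h'int : IntegrableOn h' (Ioi 0) := by
      have h2 := hφint.sub hG_Ioi
      have : h' = (fun a => h' a + G a) - G := by funext z; simp
      rw [this]
      exact h2
    have h'Ici : IntegrableOn h' (Ici 0) := (integrableOn_Ici_iff_integrableOn_Ioi).mpr h'int
    have hlim : Tendsto (fun T : ℝ => ∫ a in (0:ℝ)..T, h' a) atTop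
        (𝓝 (∫ a in Ioi (0:ℝ), h' a)) :=
      intervalIntegral_tendsto_integral_Ioi 0 h'int tendsto_id
    have hhlim : Tendsto h atTop (𝓝 (h 0 + ∫ a in Ioi (0:ℝ), h' a)) := by
      apply Tendsto.congr' _ (tendsto_const_nhds.add hlim)
      filter_upwards [eventually_ge_atTop (0:ℝ)] with T hT
      rw [hFTC T hT]; ring
    have hzero := helper_tendsto_zero h _ hint hhlim
    refine ⟨h'Ici, ?_⟩
    rw [integral_Ici_eq_integral_Ioi]
    linarith

/-- The main computation: `∫ Ψ ft = f 0 - (1/r) ∫ β f` for a solution-slice `f` of the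
age-structured transport equation. -/
lemma helper_main_aux (μ0 M r : ℝ) (μ β Ψ f fa ft : ℝ → ℝ)
    (hμ0 : 0 < μ0) (hμc : Continuous μ) (hμb : ∀ a, μ0 ≤ μ a)
    (hβc : Continuous β) (hβnn : ∀ a, 0 ≤ β a) (hβM : ∀ a, β a ≤ M)
    (hr : r = ∫ a in Ici (0:ℝ), β a * Real.exp (-(∫ s in (0:ℝ)..a, μ s)))
    (hrpos : 0 < r)
    (hΨ : ∀ a, 0 ≤ a → Ψ a = (1 / r) * ∫ s in Ici a, β s * Real.exp (-(∫ ξ in a..s, μ ξ)))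
    (hf : IntegrableOn f (Ici 0)) (hfa : IntegrableOn fa (Ici 0))
    (hfnn : ∀ a, 0 ≤ a → 0 ≤ f a)
    (hfd : ∀ a, 0 ≤ a → HasDerivWithinAt f (fa a) (Ici 0) a)
    (hft : ∀ a, 0 ≤ a → ft a + fa a = -(μ a) * f a) :
    (∫ a in Ici (0:ℝ), Ψ a * ft a)
      = f 0 - (1 / r) * ∫ a in Ici (0:ℝ), β a * f a := by
  have hM0 : 0 ≤ M := le_trans (hβnn 0) (hβM 0)
  have hμnn : ∀ a, 0 ≤ μ a := fun a => le_trans hμ0.le (hμb a)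
  set I : ℝ → ℝ := fun a => ∫ s in (0:ℝ)..a, μ s with hIdef
  have hμii : ∀ a b : ℝ, IntervalIntegrable μ volume a b :=
    fun a b => hμc.intervalIntegrable a b
  have hIderiv : ∀ a, HasDerivAt I (μ a) a :=
    fun a => (hμc.integral_hasStrictDerivAt 0 a).hasDerivAt
  have hIcont : Continuous I :=
    continuous_iff_continuousAt.mpr (fun a => (hIderiv a).continuousAt)
  have hIsub : ∀ a s : ℝ, (∫ ξ in a..s, μ ξ) = I s - I a :=
    fun a s => (intervalIntegral.integral_interval_sub_left (hμii 0 s) (hμii 0 a)).symm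
  have hIlb : ∀ a s : ℝ, a ≤ s → μ0 * (s - a) ≤ I s - I a := by
    intro a s has
    rw [← hIsub a s]
    have h1 : (∫ _ in a..s, μ0) ≤ ∫ ξ in a..s, μ ξ :=
      intervalIntegral.integral_mono_on has intervalIntegrable_const (hμii a s)
        (fun u _ => hμb u)
    rwa [intervalIntegral.integral_const, smul_eq_mul, mul_comm] at h1
  set w : ℝ → ℝ := fun s => β s * Real.exp (-(I s)) with hwdef
  have hwcont : Continuous w := hβc.mul (Real.continuous_exp.comp hIcont.neg)
  have hwnn : ∀ s, 0 ≤ w s := fun s => mul_nonneg (hβnn s) (Real.exp_pos _).le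
  have hwb : ∀ s, 0 ≤ s → w s ≤ M * Real.exp (-(μ0 * s)) := by
    intro s hs
    have h1 : μ0 * s ≤ I s := by
      have := hIlb 0 s hs
      simpa [hIdef] using this
    exact mul_le_mul (hβM s) (Real.exp_le_exp.mpr (neg_le_neg h1)) (Real.exp_pos _).le hM0
  have hexpint : ∀ c : ℝ, IntegrableOn (fun s => Real.exp (-(μ0 * s))) (Ici c) := by
    intro c
    rw [integrableOn_Ici_iff_integrableOn_Ioi]
    have := exp_neg_integrableOn_Ioi c hμ0
    simpa [neg_mul] using this
  have hwint : IntegrableOn w (Ici 0) := by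
    refine Integrable.mono' ((hexpint 0).const_mul M) hwcont.aestronglyMeasurable ?_
    filter_upwards [ae_restrict_mem measurableSet_Ici] with a ha
    rw [Real.norm_of_nonneg (hwnn a)]
    exact hwb a ha
  have hrw : r = ∫ a in Ici (0:ℝ), w a := hr
  set Fn : ℝ → ℝ := fun a => r - ∫ s in (0:ℝ)..a, w s with hFndef
  have hFnderiv : ∀ a, HasDerivAt Fn (-(w a)) a :=
    fun a => ((hwcont.integral_hasStrictDerivAt 0 a).hasDerivAt).const_sub r
  have hFn_eq : ∀ a, 0 ≤ a → (∫ s in Ici a, w s) = Fn a := by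
    intro a ha
    have hsplit : (∫ s in Ioi (0:ℝ), w s) = (∫ s in Ioc 0 a, w s) + ∫ s in Ioi a, w s := by
      rw [← setIntegral_union (Ioc_disjoint_Ioi le_rfl) measurableSet_Ioi
        ((hwint.mono_set (fun z hz => hz.1.le)))
        ((hwint.mono_set (fun z hz => le_trans ha (le_of_lt hz))))]
      rw [Ioc_union_Ioi_eq_Ioi ha]
    have h2 : (∫ s in Ioc (0:ℝ) a, w s) = ∫ s in (0:ℝ)..a, w s :=
      (intervalIntegral.integral_of_le ha).symm
    have h3 : (∫ s in Ici a, w s) = ∫ s in Ioi a, w s := integral_Ici_eq_integral_Ioi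
    have h4 : (∫ s in Ici (0:ℝ), w s) = ∫ s in Ioi (0:ℝ), w s := integral_Ici_eq_integral_Ioi
    rw [h3, hFndef]
    rw [hrw, h4, hsplit, h2]
    ring
  set E : ℝ → ℝ := fun a => Real.exp (I a) with hEdef
  have hEderiv : ∀ a, HasDerivAt E (E a * μ a) a := fun a => (hIderiv a).exp
  have hEw : ∀ a, E a * w a = β a := by
    intro a
    have h1 : E a * Real.exp (-(I a)) = 1 := by
      rw [hEdef, ← Real.exp_add]
      simp
    calc E a * w a = β a * (E a * Real.exp (-(I a))) := by rw [hwdef]; ring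
      _ = β a := by rw [h1, mul_one]
  set Ψn : ℝ → ℝ := fun a => (1 / r) * (E a * Fn a) with hΨndef
  have hΨeq : ∀ a, 0 ≤ a → Ψ a = Ψn a := by
    intro a ha
    rw [hΨ a ha, hΨndef]
    have hptw : (fun s => β s * Real.exp (-(∫ ξ in a..s, μ ξ))) = fun s => E a * w s := by
      funext s
      rw [hIsub a s, neg_sub, sub_eq_add_neg, Real.exp_add, hwdef, hEdef]
      ring
    rw [hptw, integral_const_mul, hFn_eq a ha]
  have hΨnderiv : ∀ a, HasDerivAt Ψn (μ a * Ψn a - β a / r) a := by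
    intro a
    have h1 := ((hEderiv a).mul (hFnderiv a)).const_mul (1 / r)
    refine h1.congr_deriv ?_
    rw [← hEw a, hΨndef]
    field_simp
    ring
  have hΨncont : Continuous Ψn :=
    continuous_iff_continuousAt.mpr (fun a => (hΨnderiv a).continuousAt)
  have hΨnnn : ∀ a, 0 ≤ a → 0 ≤ Ψn a := by
    intro a ha
    have h0 : 0 ≤ ∫ s in Ici a, w s := setIntegral_nonneg measurableSet_Ici (fun s _ => hwnn s)
    have hE : 0 < E a := Real.exp_pos _
    show 0 ≤ 1 / r * (E a * Fn a)
    rw [← hFn_eq a ha]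
    positivity
  have hexpval : ∀ c : ℝ, (∫ s in Ioi c, Real.exp (-(μ0 * s))) = Real.exp (-(μ0 * c)) / μ0 := by
    intro c
    have hder : ∀ x ∈ Ici c, HasDerivAt (fun s => -(Real.exp (-(μ0 * s)) / μ0))
        (Real.exp (-(μ0 * x))) x := by
      intro x _
      have h1 : HasDerivAt (fun s : ℝ => -(μ0 * s)) (-μ0) x := by
        exact ((hasDerivAt_id x).const_mul μ0).neg.congr_deriv (by ring)
      have h2 := ((h1.exp).div_const μ0).neg
      refine h2.congr_deriv ?_
      field_simp
    have hlim : Tendsto (fun s => -(Real.exp (-(μ0 * s)) / μ0)) atTop (𝓝 0) := by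
      have h1 : Tendsto (fun s : ℝ => μ0 * s) atTop atTop :=
        (tendsto_id.const_mul_atTop hμ0)
      have h2 : Tendsto (fun s : ℝ => Real.exp (-(μ0 * s))) atTop (𝓝 0) :=
        Real.tendsto_exp_atBot.comp (tendsto_neg_atTop_atBot.comp h1)
      have := (h2.div_const μ0).neg
      simpa using this
    have := integral_Ioi_of_hasDerivAt_of_tendsto' hder
      ((hexpint c).mono_set Ioi_subset_Ici_self) hlim
    rw [this]
    ring
  have hK : ∀ a, 0 ≤ a → Ψn a ≤ M / (r * μ0) := by
    intro a ha
    have hmono : (∫ s in Ici a, E a * w s) ≤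
        ∫ s in Ici a, M * Real.exp (μ0 * a) * Real.exp (-(μ0 * s)) := by
      refine setIntegral_mono_on ((hwint.mono_set (Ici_subset_Ici.mpr ha)).const_mul (E a))
        (((hexpint a).const_mul _)) measurableSet_Ici ?_
      intro s hs
      have h1 : E a * w s = β s * Real.exp (I a - I s) := by
        show Real.exp (I a) * (β s * Real.exp (-(I s))) = _
        rw [sub_eq_add_neg, Real.exp_add]
        ring
      have h2 : I a - I s ≤ μ0 * a - μ0 * s := by
        have := hIlb a s hs
        nlinarith
      rw [h1]
      calc β s * Real.exp (I a - I s) ≤ M * Real.exp (μ0 * a - μ0 * s) :=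
            mul_le_mul (hβM s) (Real.exp_le_exp.mpr h2) (Real.exp_pos _).le hM0
        _ = M * Real.exp (μ0 * a) * Real.exp (-(μ0 * s)) := by
            rw [sub_eq_add_neg, Real.exp_add]; ring
    have hval : (∫ s in Ici a, M * Real.exp (μ0 * a) * Real.exp (-(μ0 * s)))
        = M / μ0 := by
      rw [integral_const_mul, integral_Ici_eq_integral_Ioi, hexpval a]
      have h5 : Real.exp (μ0 * a) * Real.exp (-(μ0 * a)) = 1 := by
        rw [← Real.exp_add]; simp
      field_simp
      linear_combination M * h5
    have hEl : (∫ s in Ici a, E a * w s) = E a * Fn a := by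
      rw [integral_const_mul, hFn_eq a ha]
    calc Ψn a = (1 / r) * ∫ s in Ici a, E a * w s := by rw [hEl]
      _ ≤ (1 / r) * (M / μ0) := by
          rw [← hval]
          exact mul_le_mul_of_nonneg_left hmono (by positivity)
      _ = M / (r * μ0) := by field_simp
  -- the product function and its derivative
  set hh : ℝ → ℝ := fun a => Ψn a * f a with hhdef
  set hh' : ℝ → ℝ := fun a => (μ a * Ψn a - β a / r) * f a + Ψn a * fa a with hh'def
  have hd : ∀ a, 0 ≤ a → HasDerivWithinAt hh (hh' a) (Ici 0) a :=
    fun a ha => ((hΨnderiv a).hasDerivWithinAt.mul (hfd a ha))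
  have hΨb : ∀ a ∈ Ici (0:ℝ), ‖Ψn a‖ ≤ M / (r * μ0) := by
    intro a ha
    rw [Real.norm_of_nonneg (hΨnnn a ha)]
    exact hK a ha
  have hint_hh : IntegrableOn hh (Ici 0) :=
    helper_bdd_mul_int Ψn f (M / (r * μ0)) measurableSet_Ici
      hΨncont.aestronglyMeasurable hΨb hf
  have hβf : IntegrableOn (fun a => β a * f a) (Ici 0) :=
    helper_bdd_mul_int β f M measurableSet_Ici hβc.aestronglyMeasurable
      (fun a _ => by rw [Real.norm_of_nonneg (hβnn a)]; exact hβM a) hf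
  have hβfr : IntegrableOn (fun a => β a / r * f a) (Ici 0) := by
    have h0 : (fun a => β a / r * f a) = fun a => (β a * f a) / r := by
      funext a; ring
    rw [h0]
    exact hβf.div_const r
  have hΨfa : IntegrableOn (fun a => Ψn a * fa a) (Ici 0) :=
    helper_bdd_mul_int Ψn fa (M / (r * μ0)) measurableSet_Ici
      hΨncont.aestronglyMeasurable hΨb hfa
  set G : ℝ → ℝ := fun a => |β a / r * f a| + |Ψn a * fa a| with hGdef
  have hGint : IntegrableOn G (Ici 0) := hβfr.abs.add hΨfa.abs
  have hGnn : ∀ a, 0 ≤ a → 0 ≤ G a := fun a _ => add_nonneg (abs_nonneg _) (abs_nonneg _)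
  have hlb : ∀ a, 0 ≤ a → -G a ≤ hh' a := by
    intro a ha
    have h1 : 0 ≤ μ a * Ψn a * f a :=
      mul_nonneg (mul_nonneg (hμnn a) (hΨnnn a ha)) (hfnn a ha)
    have h2 := le_abs_self (β a / r * f a)
    have h3 := neg_abs_le (Ψn a * fa a)
    have h4 : (μ a * Ψn a - β a / r) * f a = μ a * Ψn a * f a - β a / r * f a := by ring
    show -(|β a / r * f a| + |Ψn a * fa a|) ≤ (μ a * Ψn a - β a / r) * f a + Ψn a * fa a
    rw [h4]
    linarith
  have h'loc : ∀ T, IntegrableOn hh' (Icc 0 T) := by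
    intro T
    exact (helper_cont_mul_int (fun a => μ a * Ψn a - β a / r) f T
        ((hμc.mul hΨncont).sub (hβc.div_const r)) (hf.mono_set (fun z hz => hz.1))).add
      (helper_cont_mul_int Ψn fa T hΨncont (hfa.mono_set (fun z hz => hz.1)))
  obtain ⟨h'int, hsum⟩ := helper_deriv_integral hh hh' G hd hint_hh hGint hGnn hlb h'loc
  have hΨn0 : Ψn 0 = 1 := by
    have hE0 : E 0 = 1 := by
      rw [hEdef]
      simp [hIdef]
    have hFn0 : Fn 0 = r := by
      rw [hFndef]
      simp
    show 1 / r * (E 0 * Fn 0) = 1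
    rw [hE0, hFn0]
    field_simp
  have hh0 : hh 0 = f 0 := by
    show Ψn 0 * f 0 = f 0
    rw [hΨn0, one_mul]
  have hcongr : (∫ a in Ici (0:ℝ), Ψ a * ft a)
      = ∫ a in Ici (0:ℝ), (-(hh' a) - β a / r * f a) := by
    refine setIntegral_congr_fun measurableSet_Ici (fun a ha => ?_)
    have hfta : ft a = -(μ a) * f a - fa a := by linarith [hft a ha]
    rw [hΨeq a ha, hfta]
    simp only [hh'def]
    ring
  rw [hcongr]
  have hsplit2 : (∫ a in Ici (0:ℝ), (-(hh' a) - β a / r * f a))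
      = (∫ a in Ici (0:ℝ), -(hh' a)) - ∫ a in Ici (0:ℝ), β a / r * f a :=
    integral_sub h'int.neg hβfr
  rw [hsplit2, integral_neg, hsum, hh0]
  have hfinal : (∫ a in Ici (0:ℝ), β a / r * f a)
      = (1 / r) * ∫ a in Ici (0:ℝ), β a * f a := by
    have h0 : (fun a => β a / r * f a) = fun a => (1 / r) * (β a * f a) := by
      funext a; ring
    rw [h0, integral_const_mul]
  rw [hfinal]
  ring

/-- congruence for the truncated mortality rate -/
lemma helper_trunc_interval (μ : ℝ → ℝ) (a s : ℝ) (ha : 0 ≤ a) (hs : 0 ≤ s) :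
    (∫ ξ in a..s, μ (max ξ 0)) = ∫ ξ in a..s, μ ξ := by
  apply intervalIntegral.integral_congr
  intro z hz
  have hz0 : 0 ≤ z := le_trans (le_min ha hs) hz.1
  show μ (max z 0) = μ z
  rw [max_eq_left hz0]


/-- **Derivative of the disease-free Lyapunov functional `L₀` along solutions
of the two-strain infection-age structured SI model (Proposition 5.3(1)).**
`L₀'(t) = -(Λ - μ_S S)²/(μ_S S) + ((R₀ˣ-1)/rₓ)∫βₓ x + ((R₀ʸ-1)/r_y)∫β_y y`;
in particular `L₀' ≤ 0` when `max{R₀ˣ, R₀ʸ} ≤ 1`. -/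
theorem lyapunov_derivative_L0
    (Λ μS μ0 : ℝ) (μx μy βx βy : ℝ → ℝ)
    (hΛ : 0 < Λ) (hμS : 0 < μS) (hμ0 : 0 < μ0) (hμSμ0 : μ0 ≤ μS)
    (hμxc : ContinuousOn μx (Ici 0)) (hμyc : ContinuousOn μy (Ici 0))
    (hμxb : ∀ a, 0 ≤ a → μ0 ≤ μx a) (hμyb : ∀ a, 0 ≤ a → μ0 ≤ μy a)
    (hβxc : Continuous βx) (hβyc : Continuous βy)
    (hβxnn : ∀ a, 0 ≤ βx a) (hβynn : ∀ a, 0 ≤ βy a)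
    (Mx My : ℝ) (hβxM : ∀ a, βx a ≤ Mx) (hβyM : ∀ a, βy a ≤ My)
    (rx ry : ℝ)
    (hrx : rx = ∫ a in Ici (0:ℝ), βx a * Real.exp (-(∫ s in (0:ℝ)..a, μx s)))
    (hry : ry = ∫ a in Ici (0:ℝ), βy a * Real.exp (-(∫ s in (0:ℝ)..a, μy s)))
    (hrxpos : 0 < rx) (hrypos : 0 < ry)
    (R0x R0y : ℝ) (hR0x : R0x = Λ * rx / μS) (hR0y : R0y = Λ * ry / μS)
    (Ψx Ψy : ℝ → ℝ)
    (hΨx : ∀ a, Ψx a = (1 / rx) * ∫ s in Ici a, βx s * Real.exp (-(∫ ξ in a..s, μx ξ)))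
    (hΨy : ∀ a, Ψy a = (1 / ry) * ∫ s in Ici a, βy s * Real.exp (-(∫ ξ in a..s, μy ξ)))
    (S : ℝ → ℝ) (hSpos : ∀ t, 0 ≤ t → 0 < S t)
    (x y xt xa yt ya : ℝ → ℝ → ℝ)
    (hxnn : ∀ t a, 0 ≤ t → 0 ≤ a → 0 ≤ x t a)
    (hynn : ∀ t a, 0 ≤ t → 0 ≤ a → 0 ≤ y t a)
    (hxt : ∀ t a, 0 ≤ t → 0 ≤ a → HasDerivAt (fun τ => x τ a) (xt t a) t)
    (hxa : ∀ t a, 0 ≤ t → 0 ≤ a → HasDerivWithinAt (fun α => x t α) (xa t a) (Ici 0) a)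
    (hyt : ∀ t a, 0 ≤ t → 0 ≤ a → HasDerivAt (fun τ => y τ a) (yt t a) t)
    (hya : ∀ t a, 0 ≤ t → 0 ≤ a → HasDerivWithinAt (fun α => y t α) (ya t a) (Ici 0) a)
    (hPDEx : ∀ t a, 0 ≤ t → 0 ≤ a → xt t a + xa t a = -(μx a) * x t a)
    (hPDEy : ∀ t a, 0 ≤ t → 0 ≤ a → yt t a + ya t a = -(μy a) * y t a)
    (hbcx : ∀ t, 0 ≤ t → x t 0 = S t * ∫ a in Ici (0:ℝ), βx a * x t a)
    (hbcy : ∀ t, 0 ≤ t → y t 0 = S t * ∫ a in Ici (0:ℝ), βy a * y t a)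
    (hODE : ∀ t, 0 ≤ t → HasDerivAt S
      (Λ - μS * S t - S t * (∫ a in Ici (0:ℝ), βx a * x t a)
        - S t * (∫ a in Ici (0:ℝ), βy a * y t a)) t)
    (hxint : ∀ t, 0 ≤ t → IntegrableOn (x t) (Ici 0))
    (hxaint : ∀ t, 0 ≤ t → IntegrableOn (xa t) (Ici 0))
    (hyint : ∀ t, 0 ≤ t → IntegrableOn (y t) (Ici 0))
    (hyaint : ∀ t, 0 ≤ t → IntegrableOn (ya t) (Ici 0))
    (hdiffx : ∀ t, 0 ≤ t → HasDerivAt (fun τ => ∫ a in Ici (0:ℝ), Ψx a * x τ a)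
      (∫ a in Ici (0:ℝ), Ψx a * xt t a) t)
    (hdiffy : ∀ t, 0 ≤ t → HasDerivAt (fun τ => ∫ a in Ici (0:ℝ), Ψy a * y τ a)
      (∫ a in Ici (0:ℝ), Ψy a * yt t a) t) :
    ∀ t, 0 ≤ t →
      HasDerivAt (fun τ => (Λ / μS) * g (S τ / (Λ / μS)) +
          (∫ a in Ici (0:ℝ), Ψx a * x τ a) + (∫ a in Ici (0:ℝ), Ψy a * y τ a))
        (-(Λ - μS * S t) ^ 2 / (μS * S t)
          + ((R0x - 1) / rx) * (∫ a in Ici (0:ℝ), βx a * x t a)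
          + ((R0y - 1) / ry) * (∫ a in Ici (0:ℝ), βy a * y t a)) t
      ∧ (max R0x R0y ≤ 1 →
          -(Λ - μS * S t) ^ 2 / (μS * S t)
          + ((R0x - 1) / rx) * (∫ a in Ici (0:ℝ), βx a * x t a)
          + ((R0y - 1) / ry) * (∫ a in Ici (0:ℝ), βy a * y t a) ≤ 0) := by
  intro t ht
  -- truncated (everywhere-continuous) mortality rates
  set μx' : ℝ → ℝ := fun a => μx (max a 0) with hμx'def
  set μy' : ℝ → ℝ := fun a => μy (max a 0) with hμy'def
  have hμx'c : Continuous μx' :=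
    hμxc.comp_continuous (continuous_id.max continuous_const) (fun a => mem_Ici.mpr (le_max_right _ _))
  have hμy'c : Continuous μy' :=
    hμyc.comp_continuous (continuous_id.max continuous_const) (fun a => mem_Ici.mpr (le_max_right _ _))
  have hμx'b : ∀ a, μ0 ≤ μx' a := fun a => hμxb _ (le_max_right _ _)
  have hμy'b : ∀ a, μ0 ≤ μy' a := fun a => hμyb _ (le_max_right _ _)
  have hμx'eq : ∀ a, 0 ≤ a → μx' a = μx a := fun a ha => by
    rw [hμx'def]; simp [max_eq_left ha]
  have hμy'eq : ∀ a, 0 ≤ a → μy' a = μy a := fun a ha => by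
    rw [hμy'def]; simp [max_eq_left ha]
  -- transfer r
  have hrx' : rx = ∫ a in Ici (0:ℝ), βx a * Real.exp (-(∫ s in (0:ℝ)..a, μx' s)) := by
    rw [hrx]
    refine (setIntegral_congr_fun measurableSet_Ici (fun a ha => ?_)).symm
    rw [helper_trunc_interval μx 0 a le_rfl ha]
  have hry' : ry = ∫ a in Ici (0:ℝ), βy a * Real.exp (-(∫ s in (0:ℝ)..a, μy' s)) := by
    rw [hry]
    refine (setIntegral_congr_fun measurableSet_Ici (fun a ha => ?_)).symm
    rw [helper_trunc_interval μy 0 a le_rfl ha]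
  -- transfer Ψ
  have hΨx' : ∀ a, 0 ≤ a →
      Ψx a = (1 / rx) * ∫ s in Ici a, βx s * Real.exp (-(∫ ξ in a..s, μx' ξ)) := by
    intro a ha
    rw [hΨx a]
    congr 1
    refine (setIntegral_congr_fun measurableSet_Ici (fun s hs => ?_)).symm
    rw [helper_trunc_interval μx a s ha (le_trans ha hs)]
  have hΨy' : ∀ a, 0 ≤ a →
      Ψy a = (1 / ry) * ∫ s in Ici a, βy s * Real.exp (-(∫ ξ in a..s, μy' ξ)) := by
    intro a ha
    rw [hΨy a]
    congr 1
    refine (setIntegral_congr_fun measurableSet_Ici (fun s hs => ?_)).symm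
    rw [helper_trunc_interval μy a s ha (le_trans ha hs)]
  -- PDE with truncated rates
  have hPDEx' : ∀ a, 0 ≤ a → xt t a + xa t a = -(μx' a) * x t a := by
    intro a ha
    rw [hμx'eq a ha]
    exact hPDEx t a ht ha
  have hPDEy' : ∀ a, 0 ≤ a → yt t a + ya t a = -(μy' a) * y t a := by
    intro a ha
    rw [hμy'eq a ha]
    exact hPDEy t a ht ha
  -- the key integral identities
  have HX : (∫ a in Ici (0:ℝ), Ψx a * xt t a)
      = x t 0 - (1 / rx) * ∫ a in Ici (0:ℝ), βx a * x t a :=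
    helper_main_aux μ0 Mx rx μx' βx Ψx (x t) (xa t) (xt t) hμ0 hμx'c hμx'b hβxc hβxnn
      hβxM hrx' hrxpos hΨx' (hxint t ht) (hxaint t ht) (fun a ha => hxnn t a ht ha)
      (fun a ha => hxa t a ht ha) hPDEx'
  have HY : (∫ a in Ici (0:ℝ), Ψy a * yt t a)
      = y t 0 - (1 / ry) * ∫ a in Ici (0:ℝ), βy a * y t a :=
    helper_main_aux μ0 My ry μy' βy Ψy (y t) (ya t) (yt t) hμ0 hμy'c hμy'b hβyc hβynn
      hβyM hry' hrypos hΨy' (hyint t ht) (hyaint t ht) (fun a ha => hynn t a ht ha)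
      (fun a ha => hya t a ht ha) hPDEy'
  rw [hbcx t ht] at HX
  rw [hbcy t ht] at HY
  -- derivative of the g-term
  have hSt : 0 < S t := hSpos t ht
  have hS0 : (0:ℝ) < Λ / μS := by positivity
  have hS' := hODE t ht
  have hu : HasDerivAt (fun τ => S τ / (Λ / μS))
      ((Λ - μS * S t - S t * (∫ a in Ici (0:ℝ), βx a * x t a)
        - S t * (∫ a in Ici (0:ℝ), βy a * y t a)) / (Λ / μS)) t := hS'.div_const _
  have hne : S t / (Λ / μS) ≠ 0 := by positivity
  have hlog := hu.log hne
  have hgS := ((hu.sub hlog).sub_const 1).const_mul (Λ / μS)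
  have hL := (hgS.add (hdiffx t ht)).add (hdiffy t ht)
  rw [HX, HY] at hL
  have hBx : 0 ≤ ∫ a in Ici (0:ℝ), βx a * x t a :=
    setIntegral_nonneg measurableSet_Ici (fun a ha => mul_nonneg (hβxnn a) (hxnn t a ht ha))
  have hBy : 0 ≤ ∫ a in Ici (0:ℝ), βy a * y t a :=
    setIntegral_nonneg measurableSet_Ici (fun a ha => mul_nonneg (hβynn a) (hynn t a ht ha))
  constructor
  · simp only [g]
    refine hL.congr_deriv ?_
    rw [hR0x, hR0y]
    field_simp
    ring
  · intro hmax
    have hx1 : R0x ≤ 1 := le_trans (le_max_left _ _) hmax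
    have hy1 : R0y ≤ 1 := le_trans (le_max_right _ _) hmax
    have ht1 : -(Λ - μS * S t) ^ 2 / (μS * S t) ≤ 0 :=
      div_nonpos_of_nonpos_of_nonneg (neg_nonpos.mpr (sq_nonneg _)) (mul_pos hμS hSt).le
    have ht2 : ((R0x - 1) / rx) * (∫ a in Ici (0:ℝ), βx a * x t a) ≤ 0 :=
      mul_nonpos_iff.mpr (Or.inr
        ⟨div_nonpos_of_nonpos_of_nonneg (by linarith) hrxpos.le, hBx⟩)
    have ht3 : ((R0y - 1) / ry) * (∫ a in Ici (0:ℝ), βy a * y t a) ≤ 0 :=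
      mul_nonpos_iff.mpr (Or.inr
        ⟨div_nonpos_of_nonpos_of_nonneg (by linarith) hrypos.le, hBy⟩)
    linarith
end

section
/- Let S_0* > 0, let Ψ_x, Ψ_y : [0,∞) → [0,∞) be bounded measurable, let g(u) = u − ln u − 1 for u > 0, and define L_0(S, x, y) = S_0*·g(S/S_0*) + ∫_0^∞ Ψ_x(a)x(a) da + ∫_0^∞ Ψ_y(a)y(a) da for S > 0 and integrable x, y : [0,∞) → [0,∞). Assume there exist c_Ψ > 0 and Ψ̲ > 0 such that Ψ_x(a) ≥ Ψ̲ and Ψ_y(a) ≥ Ψ̲ for all a ∈ [0, c_Ψ]. Then for every ε > 0 there exists η > 0 such that whenever S > 0, x, y : [0,∞) → [0,∞) are integrable and L_0(S, x, y) ≤ η, one has |S − S_0*| ≤ ε, ∫_0^{c_Ψ} x(a) da ≤ ε and ∫_0^{c_Ψ} y(a) da ≤ ε. -/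
open MeasureTheory Real Set

lemma g_nonneg' {u : ℝ} (hu : 0 < u) : 0 ≤ g u := by
  have := Real.log_le_sub_one_of_pos hu
  simp only [g]; linarith

lemma g_pos' {u : ℝ} (hu : 0 < u) (h1 : u ≠ 1) : 0 < g u := by
  have := Real.log_lt_sub_one_of_pos hu h1
  simp only [g]; linarith

lemma g_diff' {u v : ℝ} (hu : 0 < u) (hv : 0 < v) :
    (u - v) * (v - 1) / v ≤ g u - g v := by
  have h : Real.log u - Real.log v ≤ (u - v) / v := by
    rw [← Real.log_div (ne_of_gt hu) (ne_of_gt hv)]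
    have h2 := Real.log_le_sub_one_of_pos (div_pos hu hv)
    have h3 : u / v - 1 = (u - v) / v := by field_simp
    linarith
  have h4 : g u - g v = (u - v) - (Real.log u - Real.log v) := by
    simp only [g]; ring
  have h5 : (u - v) * (v - 1) / v = (u - v) - (u - v) / v := by
    field_simp
  rw [h4, h5]; linarith

lemma key_int (Ψ x : ℝ → ℝ) (hΨm : Measurable Ψ) (hΨnn : ∀ a, 0 ≤ Ψ a)
    (M : ℝ) (hM : ∀ a, Ψ a ≤ M) (cΨ Ψlow : ℝ) (hcΨ : 0 < cΨ) (hΨlow : 0 < Ψlow)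
    (hlow : ∀ a ∈ Icc (0:ℝ) cΨ, Ψlow ≤ Ψ a)
    (hxint : IntegrableOn x (Ici 0)) (hxnn : ∀ a, 0 ≤ a → 0 ≤ x a) :
    Ψlow * ∫ a in (0:ℝ)..cΨ, x a ≤ ∫ a in Ici (0:ℝ), Ψ a * x a := by
  have hΨxint : IntegrableOn (fun a => Ψ a * x a) (Ici 0) :=
    hxint.bdd_mul (c := M) hΨm.aestronglyMeasurable
      (Filter.Eventually.of_forall fun a => by rw [Real.norm_eq_abs, abs_of_nonneg (hΨnn a)]; exact hM a)
  have hsub : Ioc (0:ℝ) cΨ ⊆ Ici 0 := fun t ht => le_of_lt ht.1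
  rw [intervalIntegral.integral_of_le hcΨ.le, ← integral_const_mul]
  have step1 : (∫ a in Ioc (0:ℝ) cΨ, Ψlow * x a) ≤ ∫ a in Ioc (0:ℝ) cΨ, Ψ a * x a := by
    refine setIntegral_mono_on ((hxint.mono_set hsub).const_mul Ψlow)
      (hΨxint.mono_set hsub) measurableSet_Ioc (fun t ht => ?_)
    exact mul_le_mul_of_nonneg_right (hlow t ⟨ht.1.le, ht.2⟩) (hxnn t ht.1.le)
  have step2 : (∫ a in Ioc (0:ℝ) cΨ, Ψ a * x a) ≤ ∫ a in Ici (0:ℝ), Ψ a * x a := by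
    refine setIntegral_mono_set hΨxint ?_ (HasSubset.Subset.eventuallyLE hsub)
    exact (ae_restrict_iff' measurableSet_Ici).2
      (Filter.Eventually.of_forall fun a ha => mul_nonneg (hΨnn a) (hxnn a ha))
  linarith

/-- **Small sublevel sets of the Lyapunov functional `L₀` force closeness to
the disease-free equilibrium** (in the `S`-component and in infected mass on
the age window `[0, c_Ψ]` where the weights are bounded below). -/
theorem sublevel_subset_ball (S0 : ℝ) (hS0 : 0 < S0)
    (Ψx Ψy : ℝ → ℝ) (hΨxm : Measurable Ψx) (hΨym : Measurable Ψy)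
    (hΨxnn : ∀ a, 0 ≤ Ψx a) (hΨynn : ∀ a, 0 ≤ Ψy a)
    (Mx My : ℝ) (hMx : ∀ a, Ψx a ≤ Mx) (hMy : ∀ a, Ψy a ≤ My)
    (cΨ Ψlow : ℝ) (hcΨ : 0 < cΨ) (hΨlow : 0 < Ψlow)
    (hlowx : ∀ a ∈ Icc (0:ℝ) cΨ, Ψlow ≤ Ψx a)
    (hlowy : ∀ a ∈ Icc (0:ℝ) cΨ, Ψlow ≤ Ψy a) :
    ∀ ε > 0, ∃ η > 0, ∀ (S : ℝ) (x y : ℝ → ℝ),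
      0 < S → IntegrableOn x (Ici 0) → IntegrableOn y (Ici 0) →
      (∀ a, 0 ≤ a → 0 ≤ x a) → (∀ a, 0 ≤ a → 0 ≤ y a) →
      S0 * g (S / S0) + (∫ a in Ici (0:ℝ), Ψx a * x a) +
        (∫ a in Ici (0:ℝ), Ψy a * y a) ≤ η →
      |S - S0| ≤ ε ∧ (∫ a in (0:ℝ)..cΨ, x a) ≤ ε ∧ (∫ a in (0:ℝ)..cΨ, y a) ≤ ε := by
  intro ε hε
  set ε' := min ε (S0 / 2) with hε'def
  have hε'pos : 0 < ε' := lt_min hε (by linarith)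
  have hε'le : ε' ≤ ε := min_le_left _ _
  have hε'S0 : ε' ≤ S0 / 2 := min_le_right _ _
  set A := (S0 - ε') / S0 with hAdef
  set B := (S0 + ε') / S0 with hBdef
  have hA0 : 0 < A := div_pos (by linarith) hS0
  have hB0 : 0 < B := div_pos (by linarith) hS0
  have hA1 : A < 1 := by rw [hAdef, div_lt_one hS0]; linarith
  have hB1 : 1 < B := by rw [hBdef, lt_div_iff₀ hS0]; linarith
  have hgA : 0 < g A := g_pos' hA0 (ne_of_lt hA1)
  have hgB : 0 < g B := g_pos' hB0 (ne_of_gt hB1)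
  refine ⟨min (S0 * min (g A) (g B)) (Ψlow * ε),
    lt_min (mul_pos hS0 (lt_min hgA hgB)) (mul_pos hΨlow hε), ?_⟩
  intro S x y hS hxint hyint hxnn hynn hL
  set η := min (S0 * min (g A) (g B)) (Ψlow * ε) with hηdef
  have hIx : 0 ≤ ∫ a in Ici (0:ℝ), Ψx a * x a :=
    setIntegral_nonneg measurableSet_Ici (fun a ha => mul_nonneg (hΨxnn a) (hxnn a ha))
  have hIy : 0 ≤ ∫ a in Ici (0:ℝ), Ψy a * y a :=
    setIntegral_nonneg measurableSet_Ici (fun a ha => mul_nonneg (hΨynn a) (hynn a ha))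
  have hgS : 0 ≤ g (S / S0) := g_nonneg' (div_pos hS hS0)
  have hgSnn : 0 ≤ S0 * g (S / S0) := mul_nonneg hS0.le hgS
  refine ⟨?_, ?_, ?_⟩
  · -- |S - S0| ≤ ε
    by_contra hcon
    push_neg at hcon
    have hgSη : S0 * g (S / S0) ≤ η := by linarith
    have hηA : η ≤ S0 * g A :=
      (min_le_left _ _).trans (mul_le_mul_of_nonneg_left (min_le_left _ _) hS0.le)
    have hηB : η ≤ S0 * g B :=
      (min_le_left _ _).trans (mul_le_mul_of_nonneg_left (min_le_right _ _) hS0.le)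
    rcases lt_abs.mp hcon with h | h
    · -- S > S0 + ε, so S/S0 > B > 1
      have hu : B < S / S0 := by
        rw [hBdef, div_lt_div_iff₀ hS0 hS0]
        nlinarith
      have hd := g_diff' (div_pos hS hS0) hB0
      have hpos : 0 < (S / S0 - B) * (B - 1) / B :=
        div_pos (mul_pos (by linarith) (by linarith)) hB0
      have : g B < g (S / S0) := by linarith
      nlinarith
    · -- S < S0 - ε, so S/S0 < A < 1
      have hu : S / S0 < A := by
        rw [hAdef, div_lt_div_iff₀ hS0 hS0]
        nlinarith
      have hd := g_diff' (div_pos hS hS0) hA0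
      have hpos : 0 < (S / S0 - A) * (A - 1) / A :=
        div_pos (mul_pos_of_neg_of_neg (by linarith) (by linarith)) hA0
      have : g A < g (S / S0) := by linarith
      nlinarith
  · have hk := key_int Ψx x hΨxm hΨxnn Mx hMx cΨ Ψlow hcΨ hΨlow hlowx hxint hxnn
    have hηε : η ≤ Ψlow * ε := min_le_right _ _
    have : Ψlow * (∫ a in (0:ℝ)..cΨ, x a) ≤ Ψlow * ε := by linarith
    exact le_of_mul_le_mul_left this hΨlow
  · have hk := key_int Ψy y hΨym hΨynn My hMy cΨ Ψlow hcΨ hΨlow hlowy hyint hynn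
    have hηε : η ≤ Ψlow * ε := min_le_right _ _
    have : Ψlow * (∫ a in (0:ℝ)..cΨ, y a) ≤ Ψlow * ε := by linarith
    exact le_of_mul_le_mul_left this hΨlow
end

section
/- Let c > 0, k > 0, let μ, β : [0,c] → [0,∞) be continuous, assume there exists b̲ ∈ [0,c) with β(a) > 0 for all a ∈ [b̲, c), and assume that k·∫_0^c β(a)·exp(−∫_0^a μ(s) ds) da > 1. Let v : [0,∞)×[0,c] → [0,∞) be continuously differentiable and satisfy ∂_t v(t,a) + ∂_a v(t,a) = −μ(a)·v(t,a) for all t ≥ 0 and a ∈ [0,c], v(t,0) = k·∫_0^c β(a)·v(t,a) da for all t ≥ 0, and v(0,·) = v_0 with v_0 not identically zero. Then ∫_0^c v(t,a) da → ∞ as t → ∞. -/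
open MeasureTheory Real Set Filter
open scoped Interval

/-- Positivity of an interval integral of a continuous nonnegative function that is
positive at some point of the interval. -/
lemma integral_pos_of_contOn {f : ℝ → ℝ} {a b x₀ : ℝ} (hab : a < b)
    (hf : ContinuousOn f (Icc a b)) (hnn : ∀ x ∈ Icc a b, 0 ≤ f x)
    (hx₀ : x₀ ∈ Icc a b) (hpos : 0 < f x₀) : 0 < ∫ x in a..b, f x := by
  have hcw : ContinuousWithinAt f (Icc a b) x₀ := hf x₀ hx₀
  rw [Metric.continuousWithinAt_iff] at hcw
  obtain ⟨δ, hδ, hδ'⟩ := hcw (f x₀ / 2) (by positivity)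
  set u := max a (x₀ - δ/2) with hu
  set w := min b (x₀ + δ/2) with hw
  have hau : a ≤ u := le_max_left _ _
  have hwb : w ≤ b := min_le_left _ _
  have hux : u ≤ x₀ := max_le hx₀.1 (by linarith)
  have hxw : x₀ ≤ w := le_min hx₀.2 (by linarith)
  have huw : u < w := by
    rcases eq_or_lt_of_le hx₀.2 with h | h
    · have h1 : u < b := max_lt (by linarith) (by rw [← h]; linarith)
      have h2 : w = b := by rw [hw, ← h]; exact min_eq_left (by linarith)
      linarith
    · have : x₀ < w := lt_min h (by linarith)
      linarith
  have key : ∀ x ∈ Icc u w, f x₀ / 2 ≤ f x := by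
    intro x hx
    have hxab : x ∈ Icc a b := ⟨hau.trans hx.1, hx.2.trans hwb⟩
    have hdist : dist x x₀ < δ := by
      rw [Real.dist_eq, abs_sub_lt_iff]
      constructor <;> [skip; skip] <;>
        · have h1 := hx.1; have h2 := hx.2
          have := le_max_right a (x₀ - δ/2)
          have := min_le_right b (x₀ + δ/2)
          linarith
    have := hδ' hxab hdist
    rw [Real.dist_eq, abs_sub_lt_iff] at this
    linarith [this.1, this.2]
  have hfi : ∀ {p q : ℝ}, a ≤ p → p ≤ q → q ≤ b → IntervalIntegrable f volume p q := by
    intro p q hp hpq hq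
    apply ContinuousOn.intervalIntegrable
    rw [uIcc_of_le hpq]
    exact hf.mono (Icc_subset_Icc hp hq)
  have h1 : (0:ℝ) ≤ ∫ x in a..u, f x :=
    intervalIntegral.integral_nonneg hau fun x hx => hnn x ⟨hx.1, hx.2.trans (hux.trans hx₀.2)⟩
  have h3 : (0:ℝ) ≤ ∫ x in w..b, f x :=
    intervalIntegral.integral_nonneg hwb fun x hx => hnn x ⟨(hx₀.1.trans hxw).trans hx.1, hx.2⟩
  have h2 : (w - u) * (f x₀ / 2) ≤ ∫ x in u..w, f x := by
    have := intervalIntegral.integral_mono_on huw.le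
      (intervalIntegrable_const (c := f x₀ / 2)) (hfi hau (hux.trans hxw) hwb) key
    simpa [intervalIntegral.integral_const, smul_eq_mul, mul_div_assoc] using this
  have hsplit : (∫ x in a..b, f x) =
      ((∫ x in a..u, f x) + (∫ x in u..w, f x)) + (∫ x in w..b, f x) := by
    rw [intervalIntegral.integral_add_adjacent_intervals (hfi le_rfl hau (hux.trans (hxw.trans hwb)))
        (hfi hau (hux.trans hxw) hwb),
      intervalIntegral.integral_add_adjacent_intervals (hfi le_rfl (hau.trans (hux.trans hxw)) hwb)
        (hfi (hau.trans (hux.trans hxw)) hwb le_rfl)]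
  have : 0 < (w - u) * (f x₀ / 2) := by
    have : 0 < w - u := by linarith
    positivity
  linarith

lemma prim_hasDerivAt {f : ℝ → ℝ} (hf : Continuous f) (a : ℝ) :
    HasDerivAt (fun u => ∫ s in (0:ℝ)..u, f s) (f a) a :=
  intervalIntegral.integral_hasDerivAt_right (hf.intervalIntegrable _ _)
    (hf.stronglyMeasurableAtFilter _ _) hf.continuousAt

lemma euler_lotka {c k : ℝ} (hc : 0 < c) (hk : 0 < k) {m b : ℝ → ℝ}
    (hm : Continuous m) (hb : Continuous b) (hmnn : ∀ x, 0 ≤ m x) (hbnn : ∀ x, 0 ≤ b x)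
    (hF0 : 1 < k * ∫ a in (0:ℝ)..c, b a * exp (-((∫ s in (0:ℝ)..a, m s) + 0 * a))) :
    ∃ lam : ℝ, 0 < lam ∧
      k * ∫ a in (0:ℝ)..c, b a * exp (-((∫ s in (0:ℝ)..a, m s) + lam * a)) = 1 := by
  set L : ℝ → ℝ := fun u => ∫ s in (0:ℝ)..u, m s with hLdef
  have hLcont : Continuous L := continuous_iff_continuousAt.2 fun a =>
    (prim_hasDerivAt hm a).continuousAt
  have hLnn : ∀ a, 0 ≤ a → 0 ≤ L a := fun a ha =>
    intervalIntegral.integral_nonneg ha fun x _ => hmnn x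
  set F : ℝ → ℝ := fun l => k * ∫ a in (0:ℝ)..c, b a * exp (-(L a + l * a)) with hFdef
  have hgc : ∀ l : ℝ, Continuous fun a => b a * exp (-(L a + l * a)) := fun l =>
    hb.mul ((hLcont.add (continuous_const.mul continuous_id)).neg.rexp)
  obtain ⟨B, hB⟩ := isCompact_Icc.exists_bound_of_continuousOn (hb.continuousOn (s := Icc 0 c))
  set B' : ℝ := max B 1 with hB'def
  have hB'1 : (1:ℝ) ≤ B' := le_max_right _ _
  have hB'pos : (0:ℝ) < B' := lt_of_lt_of_le one_pos hB'1
  have hbB : ∀ x ∈ Icc (0:ℝ) c, b x ≤ B' := fun x hx =>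
    (le_abs_self _).trans ((hB x hx).trans (le_max_left _ _))
  -- continuity of F
  have hFcont : Continuous F := by
    refine continuous_const.mul (continuous_iff_continuousAt.2 fun l₀ => ?_)
    apply intervalIntegral.continuousAt_of_dominated_interval
      (bound := fun _ => B' * exp ((|l₀| + 1) * c))
    · exact Eventually.of_forall fun l => (hgc l).aestronglyMeasurable
    · filter_upwards [Metric.ball_mem_nhds l₀ one_pos] with l hl
      refine Eventually.of_forall fun a ha => ?_
      rw [uIoc_of_le hc.le] at ha
      have hann : 0 ≤ a := ha.1.le
      have hac : a ≤ c := ha.2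
      have hlb : |l| ≤ |l₀| + 1 := by
        have := abs_sub_abs_le_abs_sub l l₀
        rw [Metric.mem_ball, Real.dist_eq] at hl
        linarith
      have h1 : -(L a + l * a) ≤ (|l₀| + 1) * c := by
        have h2 : -(l * a) ≤ |l| * a := by
          calc -(l * a) ≤ |l * a| := neg_le_abs _
          _ = |l| * |a| := abs_mul _ _
          _ = |l| * a := by rw [abs_of_nonneg hann]
        have h3 : |l| * a ≤ (|l₀| + 1) * c :=
          mul_le_mul hlb hac hann (by positivity)
        have := hLnn a hann
        linarith
      have hbnn' := hbnn a
      rw [norm_mul, Real.norm_eq_abs, Real.norm_eq_abs, abs_of_nonneg hbnn',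
        abs_of_nonneg (Real.exp_nonneg _)]
      exact mul_le_mul (hbB a ⟨hann, hac⟩) (Real.exp_le_exp.2 h1) (Real.exp_nonneg _)
        (le_of_lt hB'pos)
    · exact intervalIntegrable_const
    · exact Eventually.of_forall fun a _ => (Continuous.continuousAt (by fun_prop))
  -- decay
  set l₁ : ℝ := 2 * k * B' with hl₁def
  have hl₁pos : 0 < l₁ := by positivity
  have hexpint : (∫ a in (0:ℝ)..c, B' * exp (-(l₁ * a)))
      = B' / l₁ * (1 - exp (-(l₁ * c))) := by
    have hder : ∀ a ∈ uIcc (0:ℝ) c, HasDerivAt (fun x => -(B' / l₁) * exp (-(l₁ * x)))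
        (B' * exp (-(l₁ * a))) a := by
      intro a _
      have h1 : HasDerivAt (fun x : ℝ => -(l₁ * x)) (-l₁) a := by
        simpa using ((hasDerivAt_id a).const_mul l₁).fun_neg
      have h2 := (h1.exp).const_mul (-(B' / l₁))
      refine h2.congr_deriv ?_
      field_simp
    have := intervalIntegral.integral_eq_sub_of_hasDerivAt hder
      ((continuous_const.mul ((continuous_const.mul continuous_id).neg.rexp)).intervalIntegrable
        _ _)
    rw [this]
    simp
    ring
  have hFl₁ : F l₁ < 1 := by
    have hmono : (∫ a in (0:ℝ)..c, b a * exp (-(L a + l₁ * a)))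
        ≤ ∫ a in (0:ℝ)..c, B' * exp (-(l₁ * a)) := by
      apply intervalIntegral.integral_mono_on hc.le
        ((hgc l₁).intervalIntegrable _ _)
        ((continuous_const.mul ((continuous_const.mul continuous_id).neg.rexp)).intervalIntegrable
          _ _)
      intro x hx
      have h1 : exp (-(L x + l₁ * x)) ≤ exp (-(l₁ * x)) := by
        apply Real.exp_le_exp.2
        have := hLnn x hx.1
        linarith
      exact mul_le_mul (hbB x hx) h1 (Real.exp_nonneg _) hB'pos.le
    have h2 : F l₁ ≤ k * (B' / l₁ * (1 - exp (-(l₁ * c)))) := by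
      rw [hFdef]
      simp only []
      rw [← hexpint]
      exact mul_le_mul_of_nonneg_left hmono hk.le
    have h3 : k * (B' / l₁ * (1 - exp (-(l₁ * c)))) < 1 := by
      have hexp : 0 < exp (-(l₁ * c)) := Real.exp_pos _
      have h4 : k * (B' / l₁) = 1 / 2 := by
        rw [hl₁def]; field_simp
      calc k * (B' / l₁ * (1 - exp (-(l₁ * c)))) = k * (B' / l₁) * (1 - exp (-(l₁ * c))) := by
            ring
      _ ≤ k * (B' / l₁) * 1 := by
            apply mul_le_mul_of_nonneg_left (by linarith)
            rw [h4]; norm_num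
      _ = 1 / 2 := by rw [h4]; ring
      _ < 1 := by norm_num
    linarith
  -- IVT
  have hF0' : 1 < F 0 := hF0
  have hsub := intermediate_value_Icc' hl₁pos.le hFcont.continuousOn (a := 0) (b := l₁)
  have h1mem : (1:ℝ) ∈ Icc (F l₁) (F 0) := ⟨hFl₁.le, hF0'.le⟩
  obtain ⟨lam, hlammem, hlameq⟩ := hsub h1mem
  refine ⟨lam, ?_, hlameq⟩
  rcases eq_or_lt_of_le hlammem.1 with h | h
  · exfalso; rw [← h] at hlameq; rw [hlameq] at hF0'; exact lt_irrefl 1 hF0'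
  · exact h
/-- **Unbounded growth of a supercritical linear age-structured population on
a bounded age interval (Lemma 4.3).** If the renewal reproduction number
`k ∫_0^c β(a) exp(-∫_0^a μ) da` exceeds `1` and the initial datum is not
identically zero, then the total population `∫_0^c v(t,a) da` tends to `∞`. -/
theorem supercritical_renewal_blowup (c k bl : ℝ) (hc : 0 < c) (hk : 0 < k)
    (μ β : ℝ → ℝ)
    (hμc : ContinuousOn μ (Icc 0 c)) (hβc : ContinuousOn β (Icc 0 c))
    (hμnn : ∀ a ∈ Icc (0:ℝ) c, 0 ≤ μ a) (hβnn : ∀ a ∈ Icc (0:ℝ) c, 0 ≤ β a)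
    (hbl : bl ∈ Ico (0:ℝ) c) (hβpos : ∀ a ∈ Ico bl c, 0 < β a)
    (hR : 1 < k * ∫ a in (0:ℝ)..c, β a * Real.exp (-(∫ s in (0:ℝ)..a, μ s)))
    (v vt va : ℝ → ℝ → ℝ)
    (hvc : ContinuousOn (fun p : ℝ × ℝ => v p.1 p.2) (Ici 0 ×ˢ Icc 0 c))
    (hvtc : ContinuousOn (fun p : ℝ × ℝ => vt p.1 p.2) (Ici 0 ×ˢ Icc 0 c))
    (hvac : ContinuousOn (fun p : ℝ × ℝ => va p.1 p.2) (Ici 0 ×ˢ Icc 0 c))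
    (hvt : ∀ t a, 0 ≤ t → a ∈ Icc (0:ℝ) c →
      HasDerivWithinAt (fun τ => v τ a) (vt t a) (Ici 0) t)
    (hva : ∀ t a, 0 ≤ t → a ∈ Icc (0:ℝ) c →
      HasDerivWithinAt (fun α => v t α) (va t a) (Icc 0 c) a)
    (hvnn : ∀ t a, 0 ≤ t → a ∈ Icc (0:ℝ) c → 0 ≤ v t a)
    (hPDE : ∀ t a, 0 ≤ t → a ∈ Icc (0:ℝ) c → vt t a + va t a = -(μ a) * v t a)
    (hbc : ∀ t, 0 ≤ t → v t 0 = k * ∫ a in (0:ℝ)..c, β a * v t a)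
    (hv0 : ∃ a ∈ Icc (0:ℝ) c, v 0 a ≠ 0) :
    Tendsto (fun t => ∫ a in (0:ℝ)..c, v t a) atTop atTop := by
  have hc0 : (0:ℝ) ≤ c := hc.le
  have hIoc : Ι (0:ℝ) c = Ioc 0 c := uIoc_of_le hc0
  -- clamped coefficients
  set cl : ℝ → ℝ := fun x => max 0 (min x c) with hcldef
  have hclcont : Continuous cl := continuous_const.max (continuous_id.min continuous_const)
  have hclmem : ∀ x, cl x ∈ Icc (0:ℝ) c :=
    fun x => ⟨le_max_left _ _, max_le hc0 (min_le_right _ _)⟩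
  have hcleq : ∀ x ∈ Icc (0:ℝ) c, cl x = x := by
    intro x hx
    simp only [hcldef]
    rw [min_eq_left hx.2, max_eq_right hx.1]
  set m : ℝ → ℝ := fun x => μ (cl x) with hmdef
  set bb : ℝ → ℝ := fun x => β (cl x) with hbbdef
  have hmcont : Continuous m := hμc.comp_continuous hclcont hclmem
  have hbbcont : Continuous bb := hβc.comp_continuous hclcont hclmem
  have hmnn : ∀ x, 0 ≤ m x := fun x => hμnn _ (hclmem x)
  have hbbnn : ∀ x, 0 ≤ bb x := fun x => hβnn _ (hclmem x)
  have hmeq : ∀ x ∈ Icc (0:ℝ) c, m x = μ x := fun x hx => by rw [hmdef]; simp [hcleq x hx]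
  have hbbeq : ∀ x ∈ Icc (0:ℝ) c, bb x = β x := fun x hx => by rw [hbbdef]; simp [hcleq x hx]
  set L : ℝ → ℝ := fun u => ∫ s in (0:ℝ)..u, m s with hLdef
  have hLd : ∀ a, HasDerivAt L (m a) a := prim_hasDerivAt hmcont
  have hLcont : Continuous L := continuous_iff_continuousAt.2 fun a => (hLd a).continuousAt
  have hLnn : ∀ a, 0 ≤ a → 0 ≤ L a := fun a ha =>
    intervalIntegral.integral_nonneg ha fun x _ => hmnn x
  have hL0 : L 0 = 0 := intervalIntegral.integral_same
  have hLeq : ∀ a ∈ Icc (0:ℝ) c, L a = ∫ s in (0:ℝ)..a, μ s := by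
    intro a ha
    apply intervalIntegral.integral_congr
    intro s hs
    rw [uIcc_of_le ha.1] at hs
    exact hmeq s ⟨hs.1, hs.2.trans ha.2⟩
  -- Euler-Lotka eigenvalue
  have hF0 : 1 < k * ∫ a in (0:ℝ)..c, bb a * exp (-((∫ s in (0:ℝ)..a, m s) + 0 * a)) := by
    have hcongr : (∫ a in (0:ℝ)..c, bb a * exp (-((∫ s in (0:ℝ)..a, m s) + 0 * a)))
        = ∫ a in (0:ℝ)..c, β a * exp (-(∫ s in (0:ℝ)..a, μ s)) := by
      apply intervalIntegral.integral_congr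
      intro a ha
      rw [uIcc_of_le hc0] at ha
      simp only [zero_mul, add_zero]
      rw [hbbeq a ha, show (∫ s in (0:ℝ)..a, m s) = ∫ s in (0:ℝ)..a, μ s from hLeq a ha]
    rw [hcongr]
    exact hR
  obtain ⟨lam, hlam, hEL⟩ := euler_lotka hc hk hmcont hbbcont hmnn hbbnn hF0
  -- the adjoint eigenfunction
  set g : ℝ → ℝ := fun a => bb a * exp (-(L a + lam * a)) with hgdef
  have hgcont : Continuous g :=
    hbbcont.mul ((hLcont.add (continuous_const.mul continuous_id)).neg.rexp)
  have hgnn : ∀ a, 0 ≤ g a := fun a => mul_nonneg (hbbnn a) (Real.exp_nonneg _)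
  set I : ℝ → ℝ := fun u => ∫ s in (0:ℝ)..u, g s with hIdef
  have hId : ∀ a, HasDerivAt I (g a) a := prim_hasDerivAt hgcont
  have hIcont : Continuous I := continuous_iff_continuousAt.2 fun a => (hId a).continuousAt
  have hI0 : I 0 = 0 := intervalIntegral.integral_same
  have hkIc : k * I c = 1 := hEL
  have hIdiff : ∀ p q : ℝ, I q - I p = ∫ s in p..q, g s := fun p q =>
    intervalIntegral.integral_interval_sub_left (hgcont.intervalIntegrable _ _)
      (hgcont.intervalIntegrable _ _)
  have hImono : ∀ p q : ℝ, p ≤ q → I p ≤ I q := by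
    intro p q hpq
    have h1 : 0 ≤ I q - I p := by
      rw [hIdiff p q]
      exact intervalIntegral.integral_nonneg hpq fun x _ => hgnn x
    linarith
  set E : ℝ → ℝ := fun a => exp (L a + lam * a) with hEdef
  have hEpos : ∀ a, 0 < E a := fun a => Real.exp_pos _
  have hEd : ∀ a, HasDerivAt E ((m a + lam) * E a) a := by
    intro a
    have h1 : HasDerivAt (fun x => L x + lam * x) (m a + lam) a := by
      simpa using (hLd a).fun_add ((hasDerivAt_id a).const_mul lam)
    simpa [mul_comm] using h1.exp
  have hEg : ∀ a, E a * g a = bb a := by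
    intro a
    have h1 : E a * exp (-(L a + lam * a)) = 1 := by
      rw [Real.exp_neg]
      exact mul_inv_cancel₀ (Real.exp_ne_zero _)
    calc E a * g a = bb a * (E a * exp (-(L a + lam * a))) := by rw [hgdef]; ring
    _ = bb a := by rw [h1, mul_one]
  set φ : ℝ → ℝ := fun a => E a * (1 - k * I a) with hφdef
  set φ' : ℝ → ℝ := fun a => (m a + lam) * φ a - k * bb a with hφ'def
  have hφd : ∀ a, HasDerivAt φ (φ' a) a := by
    intro a
    have h1 : HasDerivAt (fun x => 1 - k * I x) (-(k * g a)) a := by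
      simpa using (((hId a).const_mul k).const_sub 1)
    have h2 := (hEd a).fun_mul h1
    refine h2.congr_deriv ?_
    rw [hφ'def, hφdef]
    simp only []
    linear_combination (-k) * hEg a
  have hφcont : Continuous φ :=
    (continuous_iff_continuousAt.2 fun a => (hφd a).continuousAt)
  have hφ'cont : Continuous φ' :=
    ((hmcont.add continuous_const).mul hφcont).sub (continuous_const.mul hbbcont)
  have hφ0 : φ 0 = 1 := by rw [hφdef]; simp [hI0, hL0, hEdef]
  have hφc : φ c = 0 := by rw [hφdef]; simp only []; rw [hkIc]; ring
  have hφnn : ∀ a ∈ Icc (0:ℝ) c, 0 ≤ φ a := by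
    intro a ha
    have h1 : k * I a ≤ 1 := by
      rw [← hkIc]
      exact mul_le_mul_of_nonneg_left (hImono a c ha.2) hk.le
    have := hEpos a
    rw [hφdef]
    simp only []
    nlinarith
  have hφpos : ∀ a ∈ Ico (0:ℝ) c, 0 < φ a := by
    intro a ha
    have hx₀ : max ((a+c)/2) ((bl+c)/2) ∈ Ico bl c := by
      constructor
      · exact le_trans (by linarith [hbl.2]) (le_max_right _ _)
      · exact max_lt (by linarith [ha.2]) (by linarith [hbl.2])
    have hx₀' : max ((a+c)/2) ((bl+c)/2) ∈ Icc a c := by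
      constructor
      · exact le_trans (by linarith [ha.2]) (le_max_left _ _)
      · exact hx₀.2.le
    have hx₀nn : 0 ≤ max ((a+c)/2) ((bl+c)/2) := ha.1.trans hx₀'.1
    have hgpos : 0 < g (max ((a+c)/2) ((bl+c)/2)) := by
      apply mul_pos _ (Real.exp_pos _)
      rw [hbbeq _ ⟨hx₀nn, hx₀.2.le⟩]
      exact hβpos _ hx₀
    have hIlt : I a < I c := by
      have h1 : 0 < I c - I a := by
        rw [hIdiff a c]
        exact integral_pos_of_contOn ha.2 hgcont.continuousOn (fun x _ => hgnn x) hx₀' hgpos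
      linarith
    have h2 : k * I a < 1 := by
      rw [← hkIc]
      exact (mul_lt_mul_iff_right₀ hk).2 hIlt
    have := hEpos a
    rw [hφdef]
    simp only []
    nlinarith
  obtain ⟨M, hM⟩ := isCompact_Icc.exists_bound_of_continuousOn
    (hφcont.continuousOn (s := Icc 0 c))
  have hMpos : (0:ℝ) < M := by
    have := hM 0 ⟨le_rfl, hc0⟩
    rw [hφ0] at this
    simp at this
    linarith
  have hφle : ∀ a ∈ Icc (0:ℝ) c, φ a ≤ M := fun a ha => (le_abs_self _).trans (hM a ha)
  -- slice continuity
  have hv_slice : ∀ t, 0 ≤ t → ContinuousOn (fun a => v t a) (Icc 0 c) := by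
    intro t ht
    exact hvc.comp (Continuous.continuousOn (by fun_prop)) fun a ha => mk_mem_prod ht ha
  have hvt_slice : ∀ t, 0 ≤ t → ContinuousOn (fun a => vt t a) (Icc 0 c) := by
    intro t ht
    exact hvtc.comp (Continuous.continuousOn (by fun_prop)) fun a ha => mk_mem_prod ht ha
  have hva_slice : ∀ t, 0 ≤ t → ContinuousOn (fun a => va t a) (Icc 0 c) := by
    intro t ht
    exact hvac.comp (Continuous.continuousOn (by fun_prop)) fun a ha => mk_mem_prod ht ha
  have haesm : ∀ {f : ℝ → ℝ}, ContinuousOn f (Icc 0 c) →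
      AEStronglyMeasurable f (volume.restrict (Ι (0:ℝ) c)) := by
    intro f hf
    have h1 : AEStronglyMeasurable f (volume.restrict (Icc (0:ℝ) c)) :=
      hf.aestronglyMeasurable measurableSet_Icc
    rw [hIoc]
    exact h1.mono_measure (Measure.restrict_mono Ioc_subset_Icc_self le_rfl)
  have hii : ∀ {f : ℝ → ℝ}, ContinuousOn f (Icc 0 c) →
      IntervalIntegrable f volume 0 c := by
    intro f hf
    have h1 : ContinuousOn f (uIcc (0:ℝ) c) := by rw [uIcc_of_le hc0]; exact hf
    exact h1.intervalIntegrable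
  set Q : ℝ → ℝ := fun t => ∫ a in (0:ℝ)..c, φ a * v t a with hQdef
  -- derivative of Q
  have hQd : ∀ t, 0 < t → HasDerivAt Q (lam * Q t) t := by
    intro t ht
    -- bound for vt on a compact time-slab
    have hsub : Icc (t/2) (t+t) ×ˢ Icc (0:ℝ) c ⊆ Ici 0 ×ˢ Icc 0 c := by
      refine prod_mono (fun x hx => ?_) le_rfl
      have h0 : (0:ℝ) ≤ t/2 := by positivity
      exact le_trans h0 hx.1
    obtain ⟨C, hC⟩ := (isCompact_Icc.prod isCompact_Icc).exists_bound_of_continuousOn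
      (hvtc.mono hsub)
    have hball : Metric.ball t (t/2) ⊆ Icc (t/2) (t+t) := by
      intro x hx
      rw [Metric.mem_ball, Real.dist_eq, abs_sub_lt_iff] at hx
      constructor <;> linarith [hx.1, hx.2]
    have hballpos : ∀ x ∈ Metric.ball t (t/2), (0:ℝ) < x := by
      intro x hx
      have := (hball hx).1
      linarith
    have hkey : (∫ a in (0:ℝ)..c, φ a * vt t a) = lam * Q t := by
      have hPDE' : ∀ a ∈ Icc (0:ℝ) c, φ a * vt t a =
          lam * (φ a * v t a) - k * (β a * v t a) - (φ' a * v t a + φ a * va t a) := by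
        intro a ha
        have hp := hPDE t a ht.le ha
        have hφ'a : φ' a = (μ a + lam) * φ a - k * β a := by
          rw [hφ'def]
          simp only []
          rw [hmeq a ha, hbbeq a ha]
        have hvt' : vt t a = -(μ a) * v t a - va t a := by linarith
        rw [hvt', hφ'a]
        ring
      have hint1 : IntervalIntegrable (fun a => lam * (φ a * v t a)) volume 0 c :=
        hii (continuous_const.continuousOn.mul
          (hφcont.continuousOn.mul (hv_slice t ht.le)))
      have hint2 : IntervalIntegrable (fun a => k * (β a * v t a)) volume 0 c :=
        hii (continuous_const.continuousOn.mul (hβc.mul (hv_slice t ht.le)))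
      have hint3 : IntervalIntegrable (fun a => φ' a * v t a + φ a * va t a) volume 0 c :=
        hii ((hφ'cont.continuousOn.mul (hv_slice t ht.le)).add
          (hφcont.continuousOn.mul (hva_slice t ht.le)))
      have hsplit : (∫ a in (0:ℝ)..c, φ a * vt t a)
          = (∫ a in (0:ℝ)..c, lam * (φ a * v t a)) - (∫ a in (0:ℝ)..c, k * (β a * v t a))
            - ∫ a in (0:ℝ)..c, (φ' a * v t a + φ a * va t a) := by
        rw [← intervalIntegral.integral_sub hint1 hint2,
          ← intervalIntegral.integral_sub (hint1.sub hint2) hint3]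
        apply intervalIntegral.integral_congr
        intro a ha
        rw [uIcc_of_le hc0] at ha
        exact hPDE' a ha
      have hibp : (∫ a in (0:ℝ)..c, (φ' a * v t a + φ a * va t a))
          = φ c * v t c - φ 0 * v t 0 := by
        apply intervalIntegral.integral_eq_sub_of_hasDeriv_right_of_le hc0
          (hφcont.continuousOn.mul (hv_slice t ht.le))
        · intro x hx
          have hder : HasDerivAt (fun a => φ a * v t a) (φ' x * v t x + φ x * va t x) x :=
            (hφd x).mul ((hva t x ht.le ⟨hx.1.le, hx.2.le⟩).hasDerivAt
              (Icc_mem_nhds hx.1 hx.2))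
          exact hder.hasDerivWithinAt
        · exact hint3
      rw [hsplit, hibp, hφc, hφ0]
      rw [intervalIntegral.integral_const_mul, intervalIntegral.integral_const_mul]
      rw [show (∫ a in (0:ℝ)..c, φ a * v t a) = Q t from rfl]
      have hb0 := hbc t ht.le
      rw [← hb0]
      ring
    have hm1 : ∀ᶠ x in nhds t,
        AEStronglyMeasurable (fun a => φ a * v x a) (volume.restrict (Ι (0:ℝ) c)) := by
      filter_upwards [Metric.ball_mem_nhds t (by positivity : (0:ℝ) < t/2)] with x hx
      exact haesm (hφcont.continuousOn.mul (hv_slice x (hballpos x hx).le))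
    have hm2 : IntervalIntegrable (fun a => φ a * v t a) volume 0 c :=
      hii (hφcont.continuousOn.mul (hv_slice t ht.le))
    have hm3 : AEStronglyMeasurable (fun a => φ a * vt t a) (volume.restrict (Ι (0:ℝ) c)) :=
      haesm (hφcont.continuousOn.mul (hvt_slice t ht.le))
    have hm4 : ∀ᵐ a, a ∈ Ι (0:ℝ) c → ∀ x ∈ Metric.ball t (t/2),
        ‖φ a * vt x a‖ ≤ M * C := by
      refine Eventually.of_forall fun a ha x hx => ?_
      rw [hIoc] at ha
      have haa : a ∈ Icc (0:ℝ) c := ⟨ha.1.le, ha.2⟩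
      rw [norm_mul]
      have h1 : ‖φ a‖ ≤ M := hM a haa
      have h2 : ‖vt x a‖ ≤ C := hC (x, a) (mk_mem_prod (hball hx) haa)
      exact mul_le_mul h1 h2 (norm_nonneg _) (le_trans (norm_nonneg _) h1)
    have hm5 : ∀ᵐ a, a ∈ Ι (0:ℝ) c → ∀ x ∈ Metric.ball t (t/2),
        HasDerivAt (fun y => φ a * v y a) (φ a * vt x a) x := by
      refine Eventually.of_forall fun a ha x hx => ?_
      rw [hIoc] at ha
      have haa : a ∈ Icc (0:ℝ) c := ⟨ha.1.le, ha.2⟩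
      exact ((hvt x a (hballpos x hx).le haa).hasDerivAt
        (Ici_mem_nhds (hballpos x hx))).const_mul (φ a)
    have key := intervalIntegral.hasDerivAt_integral_of_dominated_loc_of_deriv_le
      (F := fun x a => φ a * v x a) (F' := fun x a => φ a * vt x a) (x₀ := t)
      (a := (0:ℝ)) (b := c) (μ := volume) (bound := fun _ => M * C)
      (Metric.ball_mem_nhds t (by positivity : (0:ℝ) < t/2)) hm1 hm2 hm3 hm4 intervalIntegrable_const hm5
    have hQd' := key.2
    rw [hkey] at hQd'
    exact hQd'
  -- continuity of Q at 0 from the right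
  have hQc0 : ContinuousWithinAt Q (Ici 0) 0 := by
    obtain ⟨C₀, hC₀⟩ := (isCompact_Icc.prod isCompact_Icc).exists_bound_of_continuousOn
      (hvc.mono (prod_mono (Icc_subset_Ici_self (a := (1:ℝ)) (b := (0:ℝ))) le_rfl))
    apply intervalIntegral.continuousWithinAt_of_dominated_interval
      (bound := fun _ => M * C₀)
    · filter_upwards [eventually_mem_nhdsWithin] with x hx
      exact haesm (hφcont.continuousOn.mul (hv_slice x hx))
    · filter_upwards [Icc_mem_nhdsGE (zero_lt_one (α := ℝ))] with x hx
      refine Eventually.of_forall fun a ha => ?_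
      rw [hIoc] at ha
      have haa : a ∈ Icc (0:ℝ) c := ⟨ha.1.le, ha.2⟩
      rw [norm_mul]
      have h1 : ‖φ a‖ ≤ M := hM a haa
      have h2 : ‖v x a‖ ≤ C₀ := hC₀ (x, a) (mk_mem_prod hx haa)
      exact mul_le_mul h1 h2 (norm_nonneg _) (le_trans (norm_nonneg _) h1)
    · exact intervalIntegrable_const
    · refine Eventually.of_forall fun a ha => ?_
      rw [hIoc] at ha
      have haa : a ∈ Icc (0:ℝ) c := ⟨ha.1.le, ha.2⟩
      have h1 : ContinuousWithinAt (fun x => v x a) (Ici 0) 0 := by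
        have h2 : ContinuousWithinAt (fun p : ℝ × ℝ => v p.1 p.2) (Ici 0 ×ˢ Icc 0 c) (0, a) :=
          hvc (0, a) (mk_mem_prod self_mem_Ici haa)
        have h3 : ContinuousWithinAt (fun x : ℝ => ((x, a) : ℝ × ℝ)) (Ici 0) 0 :=
          (continuous_id.prodMk continuous_const).continuousWithinAt
        exact ContinuousWithinAt.comp (g := fun p : ℝ × ℝ => v p.1 p.2)
          (f := fun x : ℝ => ((x, a) : ℝ × ℝ)) h2 h3 fun x hx => mk_mem_prod hx haa
      exact continuousWithinAt_const.mul h1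
  -- positivity of Q 0
  have hQ0pos : 0 < Q 0 := by
    obtain ⟨a₀, ha₀, hv0ne⟩ := hv0
    have hv0pos : 0 < v 0 a₀ := (hvnn 0 a₀ le_rfl ha₀).lt_of_ne (Ne.symm hv0ne)
    obtain ⟨a₁, ha₁, hv1pos⟩ : ∃ a₁ ∈ Ico (0:ℝ) c, 0 < v 0 a₁ := by
      rcases lt_or_eq_of_le ha₀.2 with h | h
      · exact ⟨a₀, ⟨ha₀.1, h⟩, hv0pos⟩
      · -- a₀ = c : use continuity from the left
        have hcw : ContinuousWithinAt (fun a => v 0 a) (Icc 0 c) c :=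
          hv_slice 0 le_rfl c ⟨hc0, le_rfl⟩
        rw [Metric.continuousWithinAt_iff] at hcw
        obtain ⟨δ, hδ, hδ'⟩ := hcw (v 0 c / 2) (by rw [← h]; positivity)
        refine ⟨max 0 (c - δ/2), ⟨le_max_left _ _, max_lt hc (by linarith)⟩, ?_⟩
        have hmem : max 0 (c - δ/2) ∈ Icc (0:ℝ) c :=
          ⟨le_max_left _ _, max_le hc0 (by linarith)⟩
        have hdist : dist (max 0 (c - δ/2)) c < δ := by
          rw [Real.dist_eq, abs_sub_lt_iff]
          have h1 : c - δ/2 ≤ max 0 (c - δ/2) := le_max_right _ _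
          have h2 : max 0 (c - δ/2) ≤ c := hmem.2
          constructor <;> linarith
        have := hδ' hmem hdist
        rw [Real.dist_eq, abs_sub_lt_iff] at this
        have hvc2 : 0 < v 0 c := by rw [← h]; exact hv0pos
        linarith [this.1, this.2]
    apply integral_pos_of_contOn hc (hφcont.continuousOn.mul (hv_slice 0 le_rfl))
      (fun x hx => mul_nonneg (hφnn x hx) (hvnn 0 x le_rfl hx))
      (⟨ha₁.1, ha₁.2.le⟩ : a₁ ∈ Icc (0:ℝ) c)
    exact mul_pos (hφpos a₁ ha₁) hv1pos
  -- exponential growth of Q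
  have hQval : ∀ t, 0 ≤ t → Q t = Q 0 * exp (lam * t) := by
    set h : ℝ → ℝ := fun t => Q t * exp (-(lam * t)) with hhdef
    have hexpd : ∀ t : ℝ, HasDerivAt (fun x => exp (-(lam * x))) (exp (-(lam * t)) * (-lam)) t := by
      intro t
      have h1 : HasDerivAt (fun x : ℝ => -(lam * x)) (-lam) t := by
        simpa using ((hasDerivAt_id t).const_mul lam).fun_neg
      exact h1.exp
    have hhd : ∀ t, 0 < t → HasDerivAt h 0 t := by
      intro t ht
      have h1 := (hQd t ht).fun_mul (hexpd t)
      refine h1.congr_deriv ?_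
      ring
    have hconst : ∀ s t : ℝ, 0 < s → s ≤ t → h t = h s := by
      intro s t hs hst
      have hcont : ContinuousOn h (Icc s t) := fun x hx =>
        (hhd x (lt_of_lt_of_le hs hx.1)).continuousAt.continuousWithinAt
      have hder : ∀ x ∈ Ico s t, HasDerivWithinAt h 0 (Ici x) x := fun x hx =>
        (hhd x (lt_of_lt_of_le hs hx.1)).hasDerivWithinAt
      exact constant_of_has_deriv_right_zero hcont hder t ⟨hst, le_rfl⟩
    have hhc0 : ContinuousWithinAt h (Ici 0) 0 :=
      hQc0.mul (Continuous.continuousWithinAt (by fun_prop))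
    have hh0 : ∀ t, 0 < t → h t = h 0 := by
      intro t ht
      have hne : (nhdsWithin (0:ℝ) (Ioc 0 t)).NeBot := left_nhdsWithin_Ioc_neBot ht
      have h1 : Tendsto h (nhdsWithin (0:ℝ) (Ioc 0 t)) (nhds (h 0)) :=
        hhc0.tendsto.mono_left (nhdsWithin_mono _ fun x hx => hx.1.le)
      have h2 : Tendsto h (nhdsWithin (0:ℝ) (Ioc 0 t)) (nhds (h t)) := by
        apply Tendsto.congr' _ (tendsto_const_nhds (x := h t))
        filter_upwards [eventually_mem_nhdsWithin] with x hx
        exact hconst x t hx.1 hx.2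
      exact tendsto_nhds_unique h2 h1
    intro t ht
    rcases eq_or_lt_of_le ht with h' | h'
    · rw [← h']; simp
    · have h1 : h t = h 0 := hh0 t h'
      rw [hhdef] at h1
      simp only [] at h1
      rw [mul_zero, neg_zero, Real.exp_zero, mul_one] at h1
      have h2 : exp (-(lam * t)) * exp (lam * t) = 1 := by
        rw [← Real.exp_add]; simp
      calc Q t = Q t * (exp (-(lam * t)) * exp (lam * t)) := by rw [h2, mul_one]
      _ = (Q t * exp (-(lam * t))) * exp (lam * t) := by ring
      _ = Q 0 * exp (lam * t) := by rw [h1]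
  -- lower bound on the total population
  have hlower : ∀ t, 0 ≤ t → Q 0 / M * exp (lam * t) ≤ ∫ a in (0:ℝ)..c, v t a := by
    intro t ht
    have h1 : Q t ≤ ∫ a in (0:ℝ)..c, M * v t a := by
      apply intervalIntegral.integral_mono_on hc0
        (hii (hφcont.continuousOn.mul (hv_slice t ht)))
        (hii (continuous_const.continuousOn.mul (hv_slice t ht)))
      intro a ha
      exact mul_le_mul_of_nonneg_right (hφle a ha) (hvnn t a ht ha)
    rw [intervalIntegral.integral_const_mul] at h1
    have h2 := hQval t ht
    rw [div_mul_eq_mul_div, div_le_iff₀ hMpos]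
    calc Q 0 * exp (lam * t) = Q t := h2.symm
    _ ≤ M * ∫ a in (0:ℝ)..c, v t a := h1
    _ = (∫ a in (0:ℝ)..c, v t a) * M := mul_comm _ _
  have hgrow : Tendsto (fun t => Q 0 / M * exp (lam * t)) atTop atTop := by
    rw [tendsto_const_mul_atTop_of_pos (by positivity)]
    exact Real.tendsto_exp_atTop.comp ((tendsto_const_mul_atTop_of_pos hlam).2 tendsto_id)
  exact tendsto_atTop_mono' atTop
    ((eventually_ge_atTop (0:ℝ)).mono fun t ht => hlower t ht) hgrow
end
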